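/- arXiv:2310.01066 — 7 statements merged into one kernel-verified Lean document; each statement's English description precedes it below -/
import Mathlib

section
/- Let A = (a_0, a_1, ..., a_n) with a_0 = 0 and (a_1, ..., a_n) a sequence of distinct integers between 1 and n, and let P_0, ..., P_k be the nonempty piles produced by patience sorting applied to A. Then for every maximum feasible set I for A and every i with 0 ≤ i ≤ k, the pile P_i contains exactly one element a_u with u ∈ I. -/
/-- One step of patience sorting: place index `i` (with value `a i`) on the
leftmost pile whose current top element is greater than `a i`, or start a
new pile at the right end if no such pile exists.  Each pile is a list of
indices with the head being the top (most recently placed) element. -/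
def place (a : ℕ → ℕ) : List (List ℕ) → ℕ → List (List ℕ)
  | [], i => [[i]]
  | p :: ps, i => if a i < a p.headI then (i :: p) :: ps else p :: place a ps i

/-- The (nonempty) piles obtained by patience sorting, processing the values
`a i` for `i ∈ idxs` in order. -/
def pilesOf (a : ℕ → ℕ) (idxs : List ℕ) : List (List ℕ) :=
  idxs.foldl (place a) []

/-- `I` is the index set of an increasing subsequence of `a`. -/
def Feasible (a : ℕ → ℕ) (I : Finset ℕ) : Prop :=
  ∀ i ∈ I, ∀ j ∈ I, i < j → a i < a j

/-- A maximum feasible set for the sequence `a₀ = 0, a₁, …, aₙ`: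
a feasible subset of the index set `{0, 1, …, n}` of largest cardinality. -/
def MaxFeasible (a : ℕ → ℕ) (n : ℕ) (I : Finset ℕ) : Prop :=
  I ⊆ Finset.range (n + 1) ∧ Feasible a I ∧
    ∀ J ⊆ Finset.range (n + 1), Feasible a J → J.card ≤ I.card

section aux

variable (a : ℕ → ℕ)

/-- relation between consecutive piles -/
def Stair (p q : List ℕ) : Prop := ∀ x ∈ q, ∃ y ∈ p, y < x ∧ a y < a x

structure PInv (m : ℕ) (L : List (List ℕ)) : Prop where
  ne : ∀ p ∈ L, p ≠ []
  lt : ∀ p ∈ L, ∀ x ∈ p, x < m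
  pw : ∀ p ∈ L, p.Pairwise (fun u v => v < u ∧ a u < a v)
  stair : L.Chain' (Stair a)

variable {a}

lemma place_ne_nil (L : List (List ℕ)) (i : ℕ) : place a L i ≠ [] := by
  cases L with
  | nil => simp [place]
  | cons p ps => rw [place]; split <;> simp

lemma headI_place (L : List (List ℕ)) (i : ℕ) :
    ∀ x ∈ (place a L i).headI, x = i ∨ x ∈ L.headI := by
  cases L with
  | nil => intro x hx; simp [place] at hx; exact Or.inl hx
  | cons p ps =>
    intro x hx
    rw [place] at hx
    split at hx
    · simp only [List.headI] at hx
      rcases List.mem_cons.mp hx with h | h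
      · exact Or.inl h
      · exact Or.inr h
    · exact Or.inr hx

lemma mem_flatten_place (L : List (List ℕ)) (i x : ℕ)
    (h : x ∈ L.flatten ∨ x = i) : x ∈ (place a L i).flatten := by
  induction L with
  | nil =>
    simp at h
    simp [place, h]
  | cons p ps ih =>
    rw [place]
    split
    · simp only [List.flatten_cons, List.mem_append, List.mem_cons] at h ⊢
      tauto
    · simp only [List.flatten_cons, List.mem_append] at h ⊢
      rcases h with (h | h) | h
      · exact Or.inl h
      · exact Or.inr (ih (Or.inl h))
      · exact Or.inr (ih (Or.inr h))

lemma headI_min {p : List ℕ} (hne : p ≠ [])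
    (hpw : p.Pairwise (fun u v => v < u ∧ a u < a v)) :
    ∀ v ∈ p, a p.headI ≤ a v := by
  cases p with
  | nil => exact absurd rfl hne
  | cons hd tl =>
    intro v hv
    rcases List.mem_cons.mp hv with h | h
    · simp [h]
    · exact le_of_lt ((List.pairwise_cons.mp hpw).1 v h).2

lemma headI_mem' {p : List ℕ} (hne : p ≠ []) : p.headI ∈ p := by
  cases p with
  | nil => exact absurd rfl hne
  | cons hd tl => exact List.mem_cons_self

lemma stair_headI {p : List ℕ} {ps : List (List ℕ)}
    (h : List.Chain' (Stair a) (p :: ps)) : Stair a p ps.headI := by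
  cases ps with
  | nil => intro x hx; exact absurd hx List.not_mem_nil
  | cons q qs => exact (List.isChain_cons_cons.mp h).1

lemma pinv_place {m : ℕ} {L : List (List ℕ)} (h : PInv a m L)
    (hne : ∀ x, x < m → a x ≠ a m) : PInv a (m + 1) (place a L m) := by
  induction L with
  | nil =>
    refine ⟨by simp [place], ?_, ?_, ?_⟩
    · simp only [place]; intro p hp x hx
      simp at hp; subst hp; simp at hx; omega
    · simp only [place]; intro p hp; simp at hp; subst hp; simp
    · simp [place, List.Chain']
  | cons p ps ih =>
    have hpne : p ≠ [] := h.ne p (List.mem_cons_self)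
    have hhd : p.headI ∈ p := headI_mem' hpne
    have hps : PInv a m ps :=
      ⟨fun q hq => h.ne q (List.mem_cons_of_mem p hq),
       fun q hq => h.lt q (List.mem_cons_of_mem p hq),
       fun q hq => h.pw q (List.mem_cons_of_mem p hq),
       (List.isChain_cons.mp h.stair).2⟩
    rw [show place a (p :: ps) m = if a m < a p.headI then (m :: p) :: ps
      else p :: place a ps m from rfl]
    split
    case isTrue hlt =>
      -- new pile list : (m :: p) :: ps
      refine ⟨?_, ?_, ?_, ?_⟩
      · intro q hq
        rcases List.mem_cons.mp hq with rfl | hq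
        · simp
        · exact hps.ne q hq
      · intro q hq x hx
        rcases List.mem_cons.mp hq with rfl | hq
        · rcases List.mem_cons.mp hx with rfl | hx
          · omega
          · have := h.lt p (List.mem_cons_self) x hx; omega
        · have := hps.lt q hq x hx; omega
      · intro q hq
        rcases List.mem_cons.mp hq with rfl | hq
        · refine List.pairwise_cons.mpr ⟨?_, h.pw p (List.mem_cons_self)⟩
          intro v hv
          refine ⟨h.lt p (List.mem_cons_self) v hv, ?_⟩
          exact lt_of_lt_of_le hlt (headI_min hpne (h.pw p (List.mem_cons_self)) v hv)
        · exact hps.pw q hq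
      · refine List.isChain_cons.mpr ⟨?_, hps.stair⟩
        intro q hq
        have hst : Stair a p q := by
          have := stair_headI h.stair
          cases ps with
          | nil => simp at hq
          | cons q' qs' =>
            simp only [List.head?_cons, Option.mem_some_iff] at hq
            subst hq
            exact this
        intro x hx
        obtain ⟨y, hy, h1, h2⟩ := hst x hx
        exact ⟨y, List.mem_cons_of_mem m hy, h1, h2⟩
    case isFalse hlt =>
      have hheadlt : p.headI < m := h.lt p (List.mem_cons_self) p.headI hhd
      have hstrict : a p.headI < a m :=
        lt_of_le_of_ne (not_lt.mp hlt) (hne p.headI hheadlt)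
      have hpinv' := ih hps
      refine ⟨?_, ?_, ?_, ?_⟩
      · intro q hq
        rcases List.mem_cons.mp hq with rfl | hq
        · exact hpne
        · exact hpinv'.ne q hq
      · intro q hq x hx
        rcases List.mem_cons.mp hq with rfl | hq
        · have := h.lt _ List.mem_cons_self x hx; omega
        · exact hpinv'.lt q hq x hx
      · intro q hq
        rcases List.mem_cons.mp hq with rfl | hq
        · exact h.pw _ List.mem_cons_self
        · exact hpinv'.pw q hq
      · refine List.isChain_cons.mpr ⟨?_, hpinv'.stair⟩
        intro q hq
        have hq' : q = (place a ps m).headI := by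
          have := place_ne_nil (a := a) ps m
          cases hplace : place a ps m with
          | nil => exact absurd hplace this
          | cons r rs =>
            rw [hplace] at hq
            simp only [List.head?_cons, Option.mem_some_iff] at hq
            simp [hq, hplace]
        subst hq'
        intro x hx
        rcases headI_place ps m x hx with rfl | hx'
        · exact ⟨p.headI, hhd, hheadlt, hstrict⟩
        · obtain ⟨y, hy, h1, h2⟩ := stair_headI h.stair x hx'
          exact ⟨y, hy, h1, h2⟩

lemma pinv_fold (n : ℕ) (hne : ∀ x m, x < m → m ≤ n → a x ≠ a m) :
    ∀ m, m ≤ n + 1 → PInv a m (List.foldl (place a) [] (List.range m)) := by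
  intro m
  induction m with
  | zero =>
    intro _
    exact ⟨by simp, by simp, by simp, by simp [List.Chain']⟩
  | succ m ih =>
    intro hm
    rw [List.range_succ, List.foldl_append]
    simp only [List.foldl_cons, List.foldl_nil]
    exact pinv_place (ih (by omega)) (fun x hx => hne x m hx (by omega))

lemma mem_fold_flatten : ∀ (m : ℕ) (x : ℕ), x < m →
    x ∈ (List.foldl (place a) [] (List.range m)).flatten := by
  intro m
  induction m with
  | zero => omega
  | succ m ih =>
    intro x hx
    rw [List.range_succ, List.foldl_append]
    simp only [List.foldl_cons, List.foldl_nil]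
    apply mem_flatten_place
    rcases Nat.lt_succ_iff_lt_or_eq.mp hx with h | h
    · exact Or.inl (ih x h)
    · exact Or.inr h

lemma buildJ : ∀ (L : List (List ℕ)) (p : List ℕ),
    List.Chain' (Stair a) (L ++ [p]) → ∀ x ∈ p,
    ∃ J : Finset ℕ, J.card = L.length + 1 ∧ (∀ z ∈ J, z ≤ x ∧ a z ≤ a x) ∧
      Feasible a J := by
  intro L
  induction L using List.reverseRecOn with
  | nil =>
    intro p _ x _
    refine ⟨{x}, by simp, by simp, ?_⟩
    intro i hi j hj hij
    simp at hi hj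
    omega
  | append_singleton L' p' ih =>
    intro p hch x hx
    have hc : List.Chain' (Stair a) ((L' ++ [p']) ++ [p]) := hch
    simp only [List.Chain'] at hc
    rw [List.isChain_append] at hc
    obtain ⟨hc1, _, hc3⟩ := hc
    have hst : Stair a p' p := by
      apply hc3 p' _ p
      · simp
      · rw [List.getLast?_concat]; rfl
    obtain ⟨y, hy, hyx, hayx⟩ := hst x hx
    obtain ⟨J', hcard, hbound, hfeas⟩ := ih p' hc1 y hy
    have hxnot : x ∉ J' := fun hmem => by
      have := (hbound x hmem).1; omega
    refine ⟨insert x J', ?_, ?_, ?_⟩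
    · rw [Finset.card_insert_of_notMem hxnot, hcard]
      simp
    · intro z hz
      rcases Finset.mem_insert.mp hz with rfl | hz
      · exact ⟨le_refl _, le_refl _⟩
      · exact ⟨le_of_lt (lt_of_le_of_lt (hbound z hz).1 hyx),
          le_of_lt (lt_of_le_of_lt (hbound z hz).2 hayx)⟩
    · intro i hi j hj hij
      rcases Finset.mem_insert.mp hj with hj1 | hj1
      · subst hj1
        rcases Finset.mem_insert.mp hi with hi1 | hi1
        · omega
        · exact lt_of_le_of_lt (hbound i hi1).2 hayx
      · rcases Finset.mem_insert.mp hi with hi1 | hi1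
        · subst hi1
          have := (hbound j hj1).1
          omega
        · exact hfeas i hi1 j hj1 hij

end aux

/-- For every maximum feasible set `I` for `a₀ = 0, a₁, …, aₙ` (where
`a₁, …, aₙ` are distinct integers between `1` and `n`), each nonempty pile
produced by patience sorting contains exactly one element `a u` with `u ∈ I`. -/
theorem stmt1 (n : ℕ) (a : ℕ → ℕ) (hn : 0 < n) (h0 : a 0 = 0)
    (hmem : ∀ i ∈ Finset.Icc 1 n, a i ∈ Finset.Icc 1 n)
    (hinj : ∀ i ∈ Finset.Icc 1 n, ∀ j ∈ Finset.Icc 1 n, a i = a j → i = j)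
    (I : Finset ℕ) (hI : MaxFeasible a n I)
    (p : List ℕ) (hp : p ∈ pilesOf a (List.range (n + 1))) :
    ∃! u : ℕ, u ∈ p ∧ u ∈ I := by
  classical
  have hne : ∀ x m, x < m → m ≤ n → a x ≠ a m := by
    intro x m hxm hmn heq
    rcases Nat.eq_zero_or_pos x with rfl | hx
    · have hm : m ∈ Finset.Icc 1 n := Finset.mem_Icc.mpr ⟨by omega, hmn⟩
      have := hmem m hm
      rw [← heq, h0] at this
      simp [Finset.mem_Icc] at this
    · have hx' : x ∈ Finset.Icc 1 n := Finset.mem_Icc.mpr ⟨hx, by omega⟩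
      have hm : m ∈ Finset.Icc 1 n := Finset.mem_Icc.mpr ⟨by omega, hmn⟩
      have := hinj x hx' m hm heq
      omega
  set L := pilesOf a (List.range (n + 1)) with hL
  have hInv : PInv a (n + 1) L := by
    rw [hL]; simp only [pilesOf]
    exact pinv_fold n hne (n + 1) le_rfl
  have hLne : L ≠ [] := List.ne_nil_of_mem hp
  have hLpos : 0 < L.length := List.length_pos_iff.mpr hLne
  -- build a feasible set of size L.length
  have hsplit := List.dropLast_append_getLast hLne
  set plast := L.getLast hLne with hplast
  have hplastmem : plast ∈ L := List.getLast_mem hLne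
  have hplastne : plast ≠ [] := hInv.ne plast hplastmem
  set x0 := plast.headI with hx0def
  have hx0 : x0 ∈ plast := headI_mem' hplastne
  have hchain : List.Chain' (Stair a) (L.dropLast ++ [plast]) := by
    rw [hsplit]; exact hInv.stair
  obtain ⟨J, hJcard, hJbound, hJfeas⟩ := buildJ L.dropLast plast hchain x0 hx0
  have hJcard' : J.card = L.length := by
    rw [hJcard, List.length_dropLast]; omega
  have hx0lt : x0 < n + 1 := hInv.lt plast hplastmem x0 hx0
  have hJsub : J ⊆ Finset.range (n + 1) := by
    intro z hz
    have := (hJbound z hz).1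
    exact Finset.mem_range.mpr (by omega)
  have hlen_le : L.length ≤ I.card := by
    rw [← hJcard']; exact hI.2.2 J hJsub hJfeas
  -- each pile meets I in at most one element
  have hc1 : ∀ j, ((L.getD j []).toFinset ∩ I).card ≤ 1 := by
    intro j
    rw [Finset.card_le_one]
    intro u hu v hv
    have hupile := List.mem_toFinset.mp (Finset.mem_inter.mp hu).1
    have huI := (Finset.mem_inter.mp hu).2
    have hvpile := List.mem_toFinset.mp (Finset.mem_inter.mp hv).1
    have hvI := (Finset.mem_inter.mp hv).2
    by_contra hne'
    have hpw : (L.getD j []).Pairwise (fun u v => v < u ∧ a u < a v) := by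
      by_cases hj : j < L.length
      · rw [List.getD_eq_getElem _ _ hj]
        exact hInv.pw _ (List.getElem_mem _)
      · rw [List.getD_eq_default _ _ (by omega)]
        simp
    have hS : (L.getD j []).Pairwise
        (fun u v => (v < u ∧ a u < a v) ∨ (u < v ∧ a v < a u)) :=
      hpw.imp (fun h => Or.inl h)
    have hsymm : Symmetric
        (fun u v : ℕ => (v < u ∧ a u < a v) ∨ (u < v ∧ a v < a u)) := by
      intro u v h; tauto
    rcases (haveI : Std.Symm (fun u v : ℕ => (v < u ∧ a u < a v) ∨ (u < v ∧ a v < a u)) :=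
      ⟨fun x y h => hsymm h⟩; hS.forall hupile hvpile hne') with ⟨h1, h2⟩ | ⟨h1, h2⟩
    · exact absurd (hI.2.1 v hvI u huI h1) (by omega)
    · exact absurd (hI.2.1 u huI v hvI h1) (by omega)
  -- I is covered by the piles
  have hsub : I ⊆ (Finset.range L.length).biUnion
      (fun j => (L.getD j []).toFinset ∩ I) := by
    intro u hu
    have hu' : u < n + 1 := Finset.mem_range.mp (hI.1 hu)
    have humem : u ∈ L.flatten := by
      rw [hL]; simp only [pilesOf]
      exact mem_fold_flatten (n + 1) u hu'
    obtain ⟨q, hqL, huq⟩ := List.mem_flatten.mp humem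
    obtain ⟨j, hj⟩ := List.mem_iff_get.mp hqL
    refine Finset.mem_biUnion.mpr ⟨j.1, Finset.mem_range.mpr j.2, ?_⟩
    rw [Finset.mem_inter, List.mem_toFinset]
    refine ⟨?_, hu⟩
    rw [List.getD_eq_getElem _ _ j.2]
    rw [← List.get_eq_getElem, hj]
    exact huq
  have hcard_le : I.card ≤ ∑ j ∈ Finset.range L.length,
      ((L.getD j []).toFinset ∩ I).card :=
    le_trans (Finset.card_le_card hsub) Finset.card_biUnion_le
  have hsum_le : ∑ j ∈ Finset.range L.length,
      ((L.getD j []).toFinset ∩ I).card ≤ L.length := by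
    calc ∑ j ∈ Finset.range L.length, ((L.getD j []).toFinset ∩ I).card
        ≤ ∑ _j ∈ Finset.range L.length, 1 :=
          Finset.sum_le_sum (fun j _ => hc1 j)
      _ = L.length := by simp
  have hsum_eq : ∑ j ∈ Finset.range L.length,
      ((L.getD j []).toFinset ∩ I).card = L.length := by omega
  have hone : ∀ j ∈ Finset.range L.length,
      ((L.getD j []).toFinset ∩ I).card = 1 := by
    intro j hj
    by_contra hne'
    have h0' : ((L.getD j []).toFinset ∩ I).card = 0 := by
      have := hc1 j; omega
    have hadd := Finset.add_sum_erase (Finset.range L.length)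
      (fun j => ((L.getD j []).toFinset ∩ I).card) hj
    have herase : ∑ k ∈ (Finset.range L.length).erase j,
        ((L.getD k []).toFinset ∩ I).card
        ≤ ((Finset.range L.length).erase j).card := by
      calc ∑ k ∈ (Finset.range L.length).erase j,
            ((L.getD k []).toFinset ∩ I).card
          ≤ ∑ _k ∈ (Finset.range L.length).erase j, 1 :=
            Finset.sum_le_sum (fun k _ => hc1 k)
        _ = ((Finset.range L.length).erase j).card := by simp
    have hec : ((Finset.range L.length).erase j).card = L.length - 1 := by
      rw [Finset.card_erase_of_mem hj, Finset.card_range]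
    simp only [h0', zero_add] at hadd
    omega
  -- conclude for the given pile p
  obtain ⟨j, hj⟩ := List.mem_iff_get.mp hp
  have hpj : L.getD j.1 [] = p := by
    rw [List.getD_eq_getElem _ _ j.2, ← List.get_eq_getElem, hj]
  have hcard1 : (p.toFinset ∩ I).card = 1 := by
    rw [← hpj]; exact hone j.1 (Finset.mem_range.mpr j.2)
  obtain ⟨u, hu⟩ := Finset.card_eq_one.mp hcard1
  have humem : u ∈ p.toFinset ∩ I := hu ▸ Finset.mem_singleton_self u
  refine ⟨u, ⟨List.mem_toFinset.mp (Finset.mem_inter.mp humem).1,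
    (Finset.mem_inter.mp humem).2⟩, ?_⟩
  intro v ⟨hv1, hv2⟩
  have : v ∈ p.toFinset ∩ I :=
    Finset.mem_inter.mpr ⟨List.mem_toFinset.mpr hv1, hv2⟩
  rw [hu] at this
  exact Finset.mem_singleton.mp this
end

section
/- Let A = (a_0, a_1, ..., a_n) with a_0 = 0 and (a_1, ..., a_n) a sequence of distinct integers between 1 and n, let P_0, ..., P_k be the nonempty piles produced by patience sorting applied to A, and let I be a maximum feasible set for A. If u, v ∈ I are such that a_u ∈ P_i and a_v ∈ P_j with 0 ≤ i < j ≤ k, then u ⪯_A v (that is, u < v and a_u < a_v). -/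
namespace StmtAux

variable {a : ℕ → ℕ}

structure Inv (a : ℕ → ℕ) (ps : List (List ℕ)) : Prop where
  ne : ∀ p ∈ ps, p ≠ []
  sorted : ps.Pairwise (fun p q => a p.headI ≤ a q.headI)
  headmin : ∀ p ∈ ps, ∀ x ∈ p, a p.headI ≤ a x

lemma head_place (ps : List (List ℕ)) (i : ℕ) :
    ∀ q ∈ place a ps i, q.headI = i ∨ q ∈ ps := by
  induction ps with
  | nil => intro q hq; simp [place] at hq; left; simp [hq]
  | cons p0 rest ih =>
    intro q hq
    by_cases hlt : a i < a p0.headI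
    · simp only [place, if_pos hlt, List.mem_cons] at hq
      rcases hq with h | h
      · left; simp [h]
      · right; simp [h]
    · simp only [place, if_neg hlt, List.mem_cons] at hq
      rcases hq with h | h
      · right; simp [h]
      · rcases ih q h with h1 | h1
        · left; exact h1
        · right; simp [h1]

lemma inv_place (ps : List (List ℕ)) (i : ℕ) (h : Inv a ps) : Inv a (place a ps i) := by
  induction ps with
  | nil =>
    refine ⟨?_, ?_, ?_⟩ <;> simp [place]
  | cons p0 rest ih =>
    obtain ⟨hne, hs, hm⟩ := h
    rw [List.pairwise_cons] at hs
    have hinvrest : Inv a rest :=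
      ⟨fun p hp => hne p (List.mem_cons_of_mem _ hp), hs.2,
       fun p hp => hm p (List.mem_cons_of_mem _ hp)⟩
    by_cases hlt : a i < a p0.headI
    · simp only [place, if_pos hlt]
      refine ⟨?_, ?_, ?_⟩
      · intro p hp
        rcases List.mem_cons.1 hp with h | h
        · simp [h]
        · exact hne p (List.mem_cons_of_mem _ h)
      · rw [List.pairwise_cons]
        refine ⟨?_, hs.2⟩
        intro q hq
        simp only [List.headI_cons]
        exact le_of_lt (lt_of_lt_of_le hlt (hs.1 q hq))
      · intro p hp x hx
        rcases List.mem_cons.1 hp with h | h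
        · subst h
          simp only [List.headI_cons]
          rcases List.mem_cons.1 hx with h | h
          · simp [h]
          · exact le_of_lt (lt_of_lt_of_le hlt (hm p0 (List.mem_cons_self) x h))
        · exact hm p (List.mem_cons_of_mem _ h) x hx
    · push_neg at hlt
      simp only [place, if_neg (not_lt.2 hlt)]
      have hrest := ih hinvrest
      refine ⟨?_, ?_, ?_⟩
      · intro p hp
        rcases List.mem_cons.1 hp with h | h
        · subst h; exact hne p (List.mem_cons_self)
        · exact hrest.ne p h
      · rw [List.pairwise_cons]
        refine ⟨?_, hrest.sorted⟩
        intro q hq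
        rcases head_place rest i q hq with h | h
        · rw [h]; exact hlt
        · exact hs.1 q h
      · intro p hp x hx
        rcases List.mem_cons.1 hp with h | h
        · subst h; exact hm p (List.mem_cons_self) x hx
        · exact hrest.headmin p h x hx

lemma place_stab (ps : List (List ℕ)) (i : ℕ) (k : ℕ) (p : List ℕ)
    (h : ps[k]? = some p) : ∃ q, (place a ps i)[k]? = some q ∧ p ⊆ q := by
  induction ps generalizing k with
  | nil => simp at h
  | cons p0 rest ih =>
    by_cases hlt : a i < a p0.headI
    · simp only [place, if_pos hlt]
      cases k with
      | zero =>
        simp only [List.getElem?_cons_zero, Option.some.injEq] at h; subst h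
        exact ⟨i :: p0, rfl, fun x hx => List.mem_cons_of_mem _ hx⟩
      | succ k' =>
        simp only [List.getElem?_cons_succ] at h ⊢
        exact ⟨p, h, List.Subset.refl _⟩
    · simp only [place, if_neg hlt]
      cases k with
      | zero =>
        simp only [List.getElem?_cons_zero, Option.some.injEq] at h; subst h
        exact ⟨p0, rfl, List.Subset.refl _⟩
      | succ k' =>
        simp only [List.getElem?_cons_succ] at h ⊢
        exact ih k' h

lemma place_join_perm (ps : List (List ℕ)) (i : ℕ) :
    List.Perm ((place a ps i).flatten) (i :: ps.flatten) := by
  induction ps with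
  | nil => simp [place]
  | cons p0 rest ih =>
    by_cases hlt : a i < a p0.headI
    · simp [place, if_pos hlt]
    · simp only [place, if_neg hlt, List.flatten_cons]
      exact (List.Perm.append_left p0 ih).trans List.perm_middle

lemma place_lands_right (ps : List (List ℕ)) (i : ℕ) (h : Inv a ps)
    (k : ℕ) (p : List ℕ) (hk : ps[k]? = some p) (hlt : a p.headI < a i)
    (hfresh : i ∉ ps.flatten) (j : ℕ) (q : List ℕ)
    (hj : (place a ps i)[j]? = some q) (hiq : i ∈ q) : k < j := by
  induction ps generalizing k j with
  | nil => simp at hk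
  | cons p0 rest ih =>
    obtain ⟨hne, hs, hm⟩ := h
    rw [List.pairwise_cons] at hs
    have hinvrest : Inv a rest :=
      ⟨fun p hp => hne p (List.mem_cons_of_mem _ hp), hs.2,
       fun p hp => hm p (List.mem_cons_of_mem _ hp)⟩
    by_cases hlt0 : a i < a p0.headI
    · -- contradiction: a p0.headI ≤ a p.headI < a i
      exfalso
      have hple : a p0.headI ≤ a p.headI := by
        cases k with
        | zero =>
          simp only [List.getElem?_cons_zero, Option.some.injEq] at hk; subst hk; rfl
        | succ k' =>
          simp only [List.getElem?_cons_succ] at hk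
          exact hs.1 p (List.mem_of_getElem? hk)
      exact absurd (lt_trans (lt_of_le_of_lt hple hlt) hlt0) (lt_irrefl _)
    · simp only [place, if_neg hlt0] at hj
      have hfresh0 : i ∉ p0 := fun h' => hfresh (List.mem_flatten.2 ⟨p0, List.mem_cons_self, h'⟩)
      have hfreshr : i ∉ rest.flatten := by
        intro h'
        rcases List.mem_flatten.1 h' with ⟨q', hq', hiq'⟩
        exact hfresh (List.mem_flatten.2 ⟨q', List.mem_cons_of_mem _ hq', hiq'⟩)
      cases j with
      | zero =>
        simp only [List.getElem?_cons_zero, Option.some.injEq] at hj; subst hj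
        exact absurd hiq hfresh0
      | succ j' =>
        simp only [List.getElem?_cons_succ] at hj
        cases k with
        | zero => exact Nat.succ_pos _
        | succ k' =>
          simp only [List.getElem?_cons_succ] at hk
          exact Nat.succ_lt_succ (ih hinvrest k' hk hfreshr j' hj)

lemma place_lands (ps : List (List ℕ)) (i : ℕ) :
    ∃ (j : ℕ) (q : List ℕ), (place a ps i)[j]? = some q ∧ i ∈ q := by
  have : i ∈ (place a ps i).flatten := (place_join_perm ps i).mem_iff.2 (List.mem_cons_self)
  rcases List.mem_flatten.1 this with ⟨q, hq, hiq⟩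
  rcases List.mem_iff_getElem?.1 hq with ⟨j, hj⟩
  exact ⟨j, q, hj, hiq⟩

lemma uniq_pile (L : List (List ℕ)) (hnd : L.flatten.Nodup) :
    ∀ (i j : ℕ) (p q : List ℕ) (x : ℕ), L[i]? = some p → L[j]? = some q → x ∈ p → x ∈ q → i = j := by
  induction L with
  | nil => intro i j p q x h; simp at h
  | cons p0 rest ih =>
    intro i j p q x hp hq hxp hxq
    rw [List.flatten_cons, List.nodup_append] at hnd
    cases i with
    | zero =>
      simp only [List.getElem?_cons_zero, Option.some.injEq] at hp; subst hp
      cases j with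
      | zero => rfl
      | succ j' =>
        simp only [List.getElem?_cons_succ] at hq
        exact absurd (List.mem_flatten.2 ⟨q, List.mem_of_getElem? hq, hxq⟩)
          (fun h => hnd.2.2 x hxp x h rfl)
    | succ i' =>
      simp only [List.getElem?_cons_succ] at hp
      cases j with
      | zero =>
        simp only [List.getElem?_cons_zero, Option.some.injEq] at hq; subst hq
        exact absurd (List.mem_flatten.2 ⟨p, List.mem_of_getElem? hp, hxp⟩)
          (fun h => hnd.2.2 x hxq x h rfl)
      | succ j' =>
        simp only [List.getElem?_cons_succ] at hq
        exact congrArg Nat.succ (ih hnd.2.1 i' j' p q x hp hq hxp hxq)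

lemma fold_inv (l : List ℕ) : ∀ ps, Inv a ps → Inv a (l.foldl (place a) ps) := by
  induction l with
  | nil => intro ps h; exact h
  | cons w l' ih => intro ps h; exact ih _ (inv_place ps w h)

lemma fold_join_perm (l : List ℕ) : ∀ ps : List (List ℕ),
    List.Perm ((l.foldl (place a) ps).flatten) (ps.flatten ++ l) := by
  induction l with
  | nil => intro ps; simp
  | cons w l' ih =>
    intro ps
    refine (ih (place a ps w)).trans ?_
    refine ((place_join_perm ps w).append_right l').trans ?_
    exact List.perm_middle.symm

lemma fold_stab (l : List ℕ) : ∀ (ps : List (List ℕ)) (k : ℕ) (p : List ℕ),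
    ps[k]? = some p → ∃ q, (l.foldl (place a) ps)[k]? = some q ∧ p ⊆ q := by
  induction l with
  | nil => intro ps k p h; exact ⟨p, h, List.Subset.refl _⟩
  | cons w l' ih =>
    intro ps k p h
    rcases place_stab ps w k p h with ⟨q, hq, hpq⟩
    rcases ih (place a ps w) k q hq with ⟨r, hr, hqr⟩
    exact ⟨r, hr, List.Subset.trans hpq hqr⟩

lemma mono (l : List ℕ) : ∀ (ps : List (List ℕ)), Inv a ps →
    (ps.flatten ++ l).Nodup →
    ∀ (k : ℕ) (p : List ℕ) (u : ℕ), ps[k]? = some p → u ∈ p →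
    ∀ v ∈ l, a u < a v →
    ∀ (j : ℕ) (q : List ℕ), (l.foldl (place a) ps)[j]? = some q → v ∈ q →
    k < j := by
  induction l with
  | nil => intro ps _ _ k p u _ _ v hv; simp at hv
  | cons w l' ih =>
    intro ps hinv hnd k p u hk hup v hv hav j q hj hvq
    have hndperm : ((place a ps w).flatten ++ l').Nodup := by
      exact List.Perm.nodup
        (List.perm_middle.trans ((place_join_perm ps w).append_right l').symm) hnd
    have hinv' : Inv a (place a ps w) := inv_place ps w hinv
    rcases place_stab ps w k p hk with ⟨p', hp', hpp'⟩
    rcases List.mem_cons.1 hv with hvw | hvl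
    · -- v = w : it lands strictly to the right of k, and stays there
      subst hvw
      have hfresh : v ∉ ps.flatten := by
        have := (List.nodup_append.1 hnd).2.2
        intro h'
        exact this v h' v List.mem_cons_self rfl
      have hple : a p.headI ≤ a u := hinv.headmin p (List.mem_of_getElem? hk) u hup
      rcases place_lands ps v with ⟨j0, q0, hj0, hvq0⟩
      have hkj0 : k < j0 :=
        place_lands_right ps v hinv k p hk (lt_of_le_of_lt hple hav) hfresh j0 q0 hj0 hvq0
      rcases fold_stab l' (place a ps v) j0 q0 hj0 with ⟨q1, hq1, hq0q1⟩
      have hndfin : ((l'.foldl (place a) (place a ps v)).flatten).Nodup :=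
        ((fold_join_perm l' (place a ps v)).nodup_iff).2 hndperm
      have : j = j0 := uniq_pile _ hndfin j j0 q q1 v hj hq1 hvq (hq0q1 hvq0)
      omega
    · exact ih (place a ps w) hinv' hndperm k p' u hp' (hpp' hup) v hvl hav j q hj hvq

end StmtAux


/-- Let `I` be a maximum feasible set for `a₀ = 0, a₁, …, aₙ` (where
`a₁, …, aₙ` are distinct integers between `1` and `n`).  If `u, v ∈ I` with
`a u` lying in pile `Pᵢ` and `a v` in pile `Pⱼ` for `i < j`, then `u ⪯_A v`,
that is, `u < v` and `a u < a v`. -/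
theorem stmt2 (n : ℕ) (a : ℕ → ℕ) (hn : 0 < n) (h0 : a 0 = 0)
    (hmem : ∀ i ∈ Finset.Icc 1 n, a i ∈ Finset.Icc 1 n)
    (hinj : ∀ i ∈ Finset.Icc 1 n, ∀ j ∈ Finset.Icc 1 n, a i = a j → i = j)
    (I : Finset ℕ) (hI : MaxFeasible a n I)
    (i j : ℕ) (hij : i < j) (pi pj : List ℕ)
    (hpi : (pilesOf a (List.range (n + 1)))[i]? = some pi)
    (hpj : (pilesOf a (List.range (n + 1)))[j]? = some pj)
    (u v : ℕ) (hu : u ∈ pi) (hv : v ∈ pj) (huI : u ∈ I) (hvI : v ∈ I) :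
    u < v ∧ a u < a v := by
  classical
  obtain ⟨-, hfeas, -⟩ := hI
  set L := List.range (n + 1) with hL
  have hfinal : pilesOf a L = L.foldl (place a) [] := rfl
  have hinv0 : StmtAux.Inv a ([] : List (List ℕ)) :=
    ⟨by simp, List.Pairwise.nil, by simp⟩
  have hjoinperm : List.Perm ((pilesOf a L).flatten) L := by
    have := StmtAux.fold_join_perm (a := a) L []
    simpa [pilesOf] using this
  have hndfin : ((pilesOf a L).flatten).Nodup :=
    hjoinperm.nodup_iff.2 (by rw [hL]; exact List.nodup_range)
  have hvL : v ∈ L := hjoinperm.mem_iff.1 (List.mem_flatten.2 ⟨pj, List.mem_of_getElem? hpj, hv⟩)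
  have huL : u ∈ L := hjoinperm.mem_iff.1 (List.mem_flatten.2 ⟨pi, List.mem_of_getElem? hpi, hu⟩)
  have hvn : v < n + 1 := List.mem_range.1 (by rwa [hL] at hvL)
  have hun : u < n + 1 := List.mem_range.1 (by rwa [hL] at huL)
  rcases lt_trichotomy u v with hlt | heq | hgt
  · exact ⟨hlt, hfeas u huI v hvI hlt⟩
  · exfalso
    subst heq
    exact absurd (StmtAux.uniq_pile _ hndfin i j pi pj u hpi hpj hu hv) (Nat.ne_of_lt hij)
  · -- v < u : derive j < i, contradiction
    exfalso
    have hav : a v < a u := hfeas v hvI u huI hgt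
    set l2 := (List.range (n - v)).map ((v + 1) + ·) with hl2
    have hdec : List.range (n + 1) = List.range (v + 1) ++ l2 := by
      rw [hl2, ← List.range_add]
      congr 1
      omega
    have hul2 : u ∈ l2 := by
      rw [hl2]
      exact List.mem_map.2 ⟨u - (v + 1), List.mem_range.2 (by omega), by omega⟩
    set ps0 := (List.range v).foldl (place a) ([] : List (List ℕ)) with hps0
    set ps1 := (List.range (v + 1)).foldl (place a) ([] : List (List ℕ)) with hps1
    have hps1' : ps1 = place a ps0 v := by
      rw [hps1, hps0, List.range_succ, List.foldl_append]
      rfl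
    have hfold : pilesOf a L = l2.foldl (place a) ps1 := by
      rw [hL, pilesOf, hdec, List.foldl_append, hps1]
    have hinv1 : StmtAux.Inv a ps1 := StmtAux.fold_inv _ _ hinv0
    have hnd1 : (ps1.flatten ++ l2).Nodup := by
      have hperm : List.Perm (ps1.flatten ++ l2) (List.range (v + 1) ++ l2) := by
        refine List.Perm.append_right l2 ?_
        have := StmtAux.fold_join_perm (a := a) (List.range (v + 1)) []
        simpa [hps1] using this
      refine hperm.nodup_iff.2 ?_
      rw [← hdec]
      exact List.nodup_range
    obtain ⟨k0, q0, hk0, hvq0⟩ := StmtAux.place_lands (a := a) ps0 v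
    rw [← hps1'] at hk0
    have hk0i : k0 < i := by
      refine StmtAux.mono l2 ps1 hinv1 hnd1 k0 q0 v hk0 hvq0 u hul2 hav i pi ?_ hu
      rw [← hfold]; exact hpi
    obtain ⟨q1, hq1, hq01⟩ := StmtAux.fold_stab l2 ps1 k0 q0 hk0
    rw [← hfold] at hq1
    have : j = k0 := StmtAux.uniq_pile _ hndfin j k0 pj q1 v hpj hq1 hv (hq01 hvq0)
    omega
end

section
/- Let A = (a_0, a_1, ..., a_n) with a_0 = 0 and (a_1, ..., a_n) a sequence of distinct integers between 1 and n, and let P_0, ..., P_k be the nonempty piles produced by patience sorting applied to A. Then there exists a feasible set for A of cardinality k + 1 containing exactly one index from each pile P_0, ..., P_k, and this cardinality equals the maximum cardinality of a feasible set for A; in particular, the number of nonempty piles equals the size of a maximum feasible set. -/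
namespace PatienceAux

/-- within-pile adjacent relation: nearer-to-head elements have larger index
and smaller value. -/
def R (a : ℕ → ℕ) (x y : ℕ) : Prop := y < x ∧ a x < a y

/-- pointer relation between adjacent piles. -/
def Ptr (a : ℕ → ℕ) (p q : List ℕ) : Prop := ∀ x ∈ q, ∃ y ∈ p, y < x ∧ a y < a x

lemma headI_mem {p : List ℕ} (h : p ≠ []) : p.headI ∈ p := by
  cases p with
  | nil => simp at h
  | cons x xs => simp [List.headI]

lemma head_eq_headI {α : Type*} [Inhabited α] {l : List α} (h : l ≠ []) : l.head h = l.headI := by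
  cases l with
  | nil => simp at h
  | cons x xs => simp [List.headI]

lemma place_ne_nil (a : ℕ → ℕ) (P : List (List ℕ)) (i : ℕ) : place a P i ≠ [] := by
  cases P with
  | nil => simp [place]
  | cons p ps =>
    simp only [place]
    split <;> simp

lemma place_spec (a : ℕ → ℕ) (i : ℕ) :
    ∀ P : List (List ℕ),
    (∀ p ∈ P, p ≠ []) →
    (∀ p ∈ P, ∀ x ∈ p, x < i) →
    (∀ p ∈ P, ∀ x ∈ p, a x ≠ a i) →
    ((P.map fun p => a p.headI).Chain' (· < ·)) →
    (∀ p ∈ P, p.Chain' (R a)) →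
    P.Chain' (Ptr a) →
    (∀ p ∈ place a P i, p ≠ []) ∧
    (∀ p ∈ place a P i, ∀ x ∈ p, x < i + 1) ∧
    (((place a P i).map fun p => a p.headI).Chain' (· < ·)) ∧
    (∀ p ∈ place a P i, p.Chain' (R a)) ∧
    (place a P i).Chain' (Ptr a) ∧
    (∀ x, (∃ p ∈ place a P i, x ∈ p) ↔ (∃ p ∈ P, x ∈ p) ∨ x = i) ∧
    ((place a P i).headI = i :: P.headI ∨ (P ≠ [] ∧ (place a P i).headI = P.headI)) := by
  intro P
  induction P with
  | nil =>
    intro _ _ _ _ _ _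
    refine ⟨by simp [place], by simp [place], by simp [place, List.isChain_singleton, List.Chain'], by simp [place, R, List.isChain_singleton, List.Chain'],
      by simp [place, Ptr, List.isChain_singleton, List.Chain'], by simp [place], Or.inl rfl⟩
  | cons p ps ih =>
    intro hne hlt hd htops hsort hptr
    have hpne : p ≠ [] := hne p (by simp)
    by_cases hc : a i < a p.headI
    · -- place on first pile
      have hplace : place a (p :: ps) i = (i :: p) :: ps := by simp [place, hc]
      rw [hplace]
      refine ⟨?_, ?_, ?_, ?_, ?_, ?_, ?_⟩
      · intro q hq
        rcases List.mem_cons.1 hq with rfl | hq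
        · simp
        · exact hne q (by simp [hq])
      · intro q hq x hx
        rcases List.mem_cons.1 hq with rfl | hq
        · rcases List.mem_cons.1 hx with rfl | hx
          · omega
          · have := hlt p (by simp) x hx; omega
        · have := hlt q (by simp [hq]) x hx; omega
      · -- tops
        have h1 : ((i :: p) :: ps).map (fun p => a p.headI)
            = a i :: ps.map (fun p => a p.headI) := by simp
        rw [h1]
        rw [List.Chain', List.isChain_cons]
        constructor
        · intro y hy
          cases ps with
          | nil => simp at hy
          | cons q qs =>
            simp only [List.map_cons, List.head?_cons, Option.mem_some_iff] at hy
            subst hy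
            have := (List.isChain_cons_cons.1 (by simp only [List.map_cons] at htops; exact htops)).1
            omega
        · have := htops
          simp only [List.map_cons] at this
          exact (List.isChain_cons.1 this).2
      · intro q hq
        rcases List.mem_cons.1 hq with rfl | hq
        · rw [List.Chain', List.isChain_cons]
          refine ⟨?_, hsort p (by simp)⟩
          intro y hy
          rw [List.head?_eq_head hpne, Option.mem_some_iff] at hy
          subst hy
          refine ⟨hlt p (by simp) _ (List.head_mem hpne), ?_⟩
          have : p.headI = p.head hpne := by cases p <;> simp_all [List.headI]
          rw [← this]; exact hc
        · exact hsort q (by simp [hq])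
      · -- ptr
        rw [List.Chain', List.isChain_cons]
        constructor
        · intro q hq
          cases ps with
          | nil => simp at hq
          | cons q' qs =>
            simp only [List.head?_cons, Option.mem_some_iff] at hq
            subst hq
            intro x hx
            obtain ⟨y, hy, h1, h2⟩ := (List.isChain_cons_cons.1 hptr).1 x hx
            exact ⟨y, by simp [hy], h1, h2⟩
        · exact (List.isChain_cons.1 hptr).2
      · intro x
        constructor
        · rintro ⟨q, hq, hx⟩
          rcases List.mem_cons.1 hq with heq | hq
          · rw [heq] at hx
            rcases List.mem_cons.1 hx with heq2 | hx
            · exact Or.inr heq2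
            · exact Or.inl ⟨p, by simp, hx⟩
          · exact Or.inl ⟨q, by simp [hq], hx⟩
        · rintro (⟨q, hq, hx⟩ | heq3)
          · rcases List.mem_cons.1 hq with heq | hq
            · rw [heq] at hx
              exact ⟨i :: p, by simp, by simp [hx]⟩
            · exact ⟨q, by simp [hq], hx⟩
          · exact ⟨i :: p, by simp, by simp [heq3]⟩
      · left; simp [List.headI]
    · -- recurse
      have hplace : place a (p :: ps) i = p :: place a ps i := by simp [place, hc]
      rw [hplace]
      have hdp : a p.headI < a i := by
        have h1 : a p.headI ≠ a i := hd p (by simp) _ (headI_mem hpne)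
        omega
      have htops' : ((ps.map fun p => a p.headI).Chain' (· < ·)) := by
        have := htops
        simp only [List.map_cons] at this
        exact (List.isChain_cons.1 this).2
      obtain ⟨i1, i2, i3, i4, i5, i6, i7⟩ := ih (fun q hq => hne q (by simp [hq]))
        (fun q hq => hlt q (by simp [hq])) (fun q hq => hd q (by simp [hq]))
        htops' (fun q hq => hsort q (by simp [hq])) (List.isChain_cons.1 hptr).2
      have hQne : place a ps i ≠ [] := place_ne_nil a ps i
      refine ⟨?_, ?_, ?_, ?_, ?_, ?_, ?_⟩
      · intro q hq
        rcases List.mem_cons.1 hq with heq | hq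
        · rw [heq]; exact hpne
        · exact i1 q hq
      · intro q hq x hx
        rcases List.mem_cons.1 hq with heq | hq
        · rw [heq] at hx; have := hlt p (by simp) x hx; omega
        · exact i2 q hq x hx
      · -- tops
        simp only [List.map_cons]
        rw [List.Chain', List.isChain_cons]
        refine ⟨?_, i3⟩
        intro y hy
        have hmapne : (place a ps i).map (fun p => a p.headI) ≠ [] := by
          simpa using hQne
        rw [List.head?_eq_head hmapne, Option.mem_some_iff] at hy
        subst hy
        have hhead : ((place a ps i).map fun p => a p.headI).head hmapne
            = a (place a ps i).headI.headI := by
          rw [List.head_map, head_eq_headI]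
        rw [hhead]
        rcases i7 with h | ⟨hps, h⟩
        · rw [h]; simpa using hdp
        · rw [h]
          cases ps with
          | nil => simp at hps
          | cons q qs =>
            have := (List.isChain_cons_cons.1 (by simp only [List.map_cons] at htops; exact htops)).1
            simpa using this
      · intro q hq
        rcases List.mem_cons.1 hq with heq | hq
        · rw [heq]; exact hsort p (by simp)
        · exact i4 q hq
      · -- ptr
        rw [List.Chain', List.isChain_cons]
        refine ⟨?_, i5⟩
        intro q hq
        rw [List.head?_eq_head hQne, Option.mem_some_iff] at hq
        subst hq
        rw [head_eq_headI hQne]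
        rcases i7 with h | ⟨hps, h⟩
        · rw [h]
          intro x hx
          rcases List.mem_cons.1 hx with rfl | hx
          · exact ⟨p.headI, headI_mem hpne, hlt p (by simp) _ (headI_mem hpne), hdp⟩
          · -- x ∈ ps.headI
            cases ps with
            | nil => exact absurd hx List.not_mem_nil
            | cons q qs =>
              have hq' : Ptr a p q := (List.isChain_cons_cons.1 hptr).1
              simp only [List.headI] at hx
              exact hq' x hx
        · rw [h]
          cases ps with
          | nil => simp at hps
          | cons q qs =>
            simpa [List.headI] using (List.isChain_cons_cons.1 hptr).1
      · intro x
        constructor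
        · rintro ⟨q, hq, hx⟩
          rcases List.mem_cons.1 hq with heq | hq
          · rw [heq] at hx
            exact Or.inl ⟨p, by simp, hx⟩
          · rcases (i6 x).1 ⟨q, hq, hx⟩ with ⟨q', hq', hx'⟩ | heq2
            · exact Or.inl ⟨q', by simp [hq'], hx'⟩
            · exact Or.inr heq2
        · rintro (⟨q, hq, hx⟩ | heq3)
          · rcases List.mem_cons.1 hq with heq | hq
            · rw [heq] at hx
              exact ⟨p, by simp, hx⟩
            · obtain ⟨q', hq', hx'⟩ := (i6 x).2 (Or.inl ⟨q, hq, hx⟩)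
              exact ⟨q', by simp [hq'], hx'⟩
          · obtain ⟨q', hq', hx'⟩ := (i6 x).2 (Or.inr heq3)
            exact ⟨q', by simp [hq'], hx'⟩
      · right; exact ⟨by simp, by simp [List.headI]⟩

/-- Invariant after processing indices `0, …, m-1`. -/
lemma pilesOf_inv (a : ℕ → ℕ) (N : ℕ)
    (hainj : ∀ i < N, ∀ j < N, a i = a j → i = j) :
    ∀ m ≤ N, let P := pilesOf a (List.range m)
    (∀ p ∈ P, p ≠ []) ∧
    (∀ p ∈ P, ∀ x ∈ p, x < m) ∧
    ((P.map fun p => a p.headI).Chain' (· < ·)) ∧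
    (∀ p ∈ P, p.Chain' (R a)) ∧
    P.Chain' (Ptr a) ∧
    (∀ x < m, ∃ p ∈ P, x ∈ p) := by
  intro m
  induction m with
  | zero => intro _; simp [pilesOf, List.isChain_nil, List.Chain']
  | succ m ih =>
    intro hm
    obtain ⟨i1, i2, i3, i4, i5, i6⟩ := ih (by omega)
    have hstep : pilesOf a (List.range (m + 1)) = place a (pilesOf a (List.range m)) m := by
      rw [List.range_succ]; simp [pilesOf]
    have hd : ∀ p ∈ pilesOf a (List.range m), ∀ x ∈ p, a x ≠ a m := by
      intro p hp x hx hax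
      have hxm : x < m := i2 p hp x hx
      have := hainj x (by omega) m (by omega) hax
      omega
    obtain ⟨j1, j2, j3, j4, j5, j6, _⟩ :=
      place_spec a m (pilesOf a (List.range m)) i1 i2 hd i3 i4 i5
    rw [hstep]
    refine ⟨j1, j2, j3, j4, j5, ?_⟩
    intro x hx
    rcases Nat.lt_succ_iff_lt_or_eq.1 hx with hx | heq
    · obtain ⟨p, hp, hxp⟩ := i6 x hx
      exact (j6 x).2 (Or.inl ⟨p, hp, hxp⟩)
    · exact (j6 x).2 (Or.inr heq)

/-- Select one representative from each pile, forming an increasing subsequence. -/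
lemma select (a : ℕ → ℕ) :
    ∀ P : List (List ℕ), (∀ p ∈ P, p ≠ []) → P.Chain' (Ptr a) →
    ∃ l : List ℕ, l.Chain' (fun x y => x < y ∧ a x < a y) ∧
      List.Forall₂ (fun x p => x ∈ p) l P := by
  intro P
  induction P with
  | nil => intro _ _; exact ⟨[], by simp [List.isChain_nil, List.Chain'], List.Forall₂.nil⟩
  | cons p ps ih =>
    intro hne hptr
    have hpne : p ≠ [] := hne p (by simp)
    obtain ⟨l, hl1, hl2⟩ := ih (fun q hq => hne q (by simp [hq])) (List.isChain_cons.1 hptr).2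
    cases ps with
    | nil =>
      cases hl2
      exact ⟨[p.headI], by simp [List.isChain_singleton, List.Chain'], List.Forall₂.cons (headI_mem hpne) List.Forall₂.nil⟩
    | cons q qs =>
      cases hl2 with
      | cons hx hrest =>
        rename_i x xs
        obtain ⟨y, hy, h1, h2⟩ := (List.isChain_cons_cons.1 hptr).1 x hx
        refine ⟨y :: x :: xs, ?_, List.Forall₂.cons hy (List.Forall₂.cons hx hrest)⟩
        exact List.isChain_cons_cons.2 ⟨⟨h1, h2⟩, hl1⟩

lemma forall₂_exists {l : List ℕ} {P : List (List ℕ)}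
    (h : List.Forall₂ (fun x p => x ∈ p) l P) :
    ∀ p ∈ P, ∃ x ∈ l, x ∈ p := by
  induction h with
  | nil => simp
  | cons hx _ ih =>
    intro p hp
    rcases List.mem_cons.1 hp with rfl | hp
    · exact ⟨_, by simp, hx⟩
    · obtain ⟨x, hx1, hx2⟩ := ih p hp
      exact ⟨x, by simp [hx1], hx2⟩

lemma forall₂_mem {l : List ℕ} {P : List (List ℕ)}
    (h : List.Forall₂ (fun x p => x ∈ p) l P) :
    ∀ x ∈ l, ∃ p ∈ P, x ∈ p := by
  induction h with
  | nil => simp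
  | cons hx _ ih =>
    intro x hxl
    rcases List.mem_cons.1 hxl with rfl | hxl
    · exact ⟨_, by simp, hx⟩
    · obtain ⟨p, hp1, hp2⟩ := ih x hxl
      exact ⟨p, by simp [hp1], hp2⟩

/-- In a sorted pile, two members with smaller index have larger value. -/
lemma pile_value_lt {a : ℕ → ℕ} {p : List ℕ} (hp : p.Chain' (R a))
    {u v : ℕ} (hu : u ∈ p) (hv : v ∈ p) (huv : u < v) : a v < a u := by
  haveI htrans : IsTrans ℕ (R a) := ⟨fun x y z hxy hyz => ⟨lt_trans hyz.1 hxy.1, lt_trans hxy.2 hyz.2⟩⟩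
  have hpw : p.Pairwise (R a) := (List.isChain_iff_pairwise).1 hp
  have hpw' : p.Pairwise (fun x y => R a x y ∨ R a y x) :=
    hpw.imp (fun h => Or.inl h)
  have hsymm : Symmetric (fun x y => R a x y ∨ R a y x) := fun x y h => h.symm
  have := (letI : Std.Symm (fun x y => R a x y ∨ R a y x) := ⟨fun x y h => hsymm h⟩; hpw'.forall hu hv (by omega))
  rcases this with h | h
  · exact absurd h.1 (by omega)
  · exact h.2

end PatienceAux

open PatienceAux

/-- Let `P₀, …, P_k` be the nonempty piles produced by patience sorting on
`a₀ = 0, a₁, …, aₙ` (where `a₁, …, aₙ` are distinct integers between `1` and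
`n`).  Then there is a feasible set `I` of cardinality `k + 1` (the number of
nonempty piles) containing exactly one index from each pile, and this
cardinality is the maximum cardinality of a feasible set. -/
theorem stmt5 (n : ℕ) (a : ℕ → ℕ) (hn : 0 < n) (h0 : a 0 = 0)
    (hmem : ∀ i ∈ Finset.Icc 1 n, a i ∈ Finset.Icc 1 n)
    (hinj : ∀ i ∈ Finset.Icc 1 n, ∀ j ∈ Finset.Icc 1 n, a i = a j → i = j) :
    ∃ I : Finset ℕ, I ⊆ Finset.range (n + 1) ∧ Feasible a I ∧
      I.card = (pilesOf a (List.range (n + 1))).length ∧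
      (∀ p ∈ pilesOf a (List.range (n + 1)), ∃! u : ℕ, u ∈ p ∧ u ∈ I) ∧
      (∀ J ⊆ Finset.range (n + 1), Feasible a J → J.card ≤ I.card) := by
  have hainj : ∀ i < n + 1, ∀ j < n + 1, a i = a j → i = j := by
    intro i hi j hj hij
    rcases Nat.eq_zero_or_pos i with hi0 | hi0
    · rcases Nat.eq_zero_or_pos j with hj0 | hj0
      · omega
      · have := hmem j (Finset.mem_Icc.2 ⟨hj0, by omega⟩)
        rw [← hij, hi0, h0] at this
        simp [Finset.mem_Icc] at this
    · rcases Nat.eq_zero_or_pos j with hj0 | hj0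
      · have := hmem i (Finset.mem_Icc.2 ⟨hi0, by omega⟩)
        rw [hij, hj0, h0] at this
        simp [Finset.mem_Icc] at this
      · exact hinj i (Finset.mem_Icc.2 ⟨hi0, by omega⟩) j (Finset.mem_Icc.2 ⟨hj0, by omega⟩) hij
  obtain ⟨i1, i2, i3, i4, i5, i6⟩ := pilesOf_inv a (n + 1) hainj (n + 1) le_rfl
  set P := pilesOf a (List.range (n + 1)) with hP
  obtain ⟨l, hlchain, hlf⟩ := select a P i1 i5
  haveI htrans : IsTrans ℕ (fun x y => x < y ∧ a x < a y) :=
    ⟨fun x y z hxy hyz => ⟨lt_trans hxy.1 hyz.1, lt_trans hxy.2 hyz.2⟩⟩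
  have hlpw : l.Pairwise (fun x y => x < y ∧ a x < a y) :=
    List.isChain_iff_pairwise.1 hlchain
  have hnd : l.Nodup := hlpw.imp (fun h => Nat.ne_of_lt h.1)
  have hcard : l.toFinset.card = P.length := by
    rw [List.toFinset_card_of_nodup hnd, hlf.length_eq]
  have hmeml : ∀ x ∈ l, x ∈ l.toFinset := fun x hx => List.mem_toFinset.2 hx
  have hpair : ∀ u ∈ l, ∀ v ∈ l, u < v → a u < a v := by
    intro u hu v hv huv
    have hpw' : l.Pairwise (fun x y => (x < y ∧ a x < a y) ∨ (y < x ∧ a y < a x)) :=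
      hlpw.imp (fun h => Or.inl h)
    have hsymm : Symmetric (fun x y => (x < y ∧ a x < a y) ∨ (y < x ∧ a y < a x)) :=
      fun x y h => h.symm
    rcases (letI : Std.Symm (fun x y => (x < y ∧ a x < a y) ∨ (y < x ∧ a y < a x)) := ⟨fun x y h => hsymm h⟩; hpw'.forall hu hv (by omega)) with h | h
    · exact h.2
    · exact absurd h.1 (by omega)
  have hfeas : Feasible a l.toFinset := by
    intro u hu v hv huv
    exact hpair u (List.mem_toFinset.1 hu) v (List.mem_toFinset.1 hv) huv
  refine ⟨l.toFinset, ?_, hfeas, hcard, ?_, ?_⟩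
  · intro x hx
    obtain ⟨p, hp, hxp⟩ := forall₂_mem hlf x (List.mem_toFinset.1 hx)
    exact Finset.mem_range.2 (i2 p hp x hxp)
  · intro p hp
    obtain ⟨x, hxl, hxp⟩ := forall₂_exists hlf p hp
    refine ⟨x, ⟨hxp, List.mem_toFinset.2 hxl⟩, ?_⟩
    rintro v ⟨hvp, hvI⟩
    by_contra hne
    have hvl : v ∈ l := List.mem_toFinset.1 hvI
    rcases lt_trichotomy v x with h | h | h
    · have h1 : a v < a x := hpair v hvl x hxl h
      have h2 : a x < a v := pile_value_lt (i4 p hp) hvp hxp h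
      omega
    · exact hne h
    · have h1 : a x < a v := hpair x hxl v hvl h
      have h2 : a v < a x := pile_value_lt (i4 p hp) hxp hvp h
      omega
  · intro J hJ hJf
    rw [hcard]
    have key : ∀ j ∈ J, ∃ p ∈ P, j ∈ p := by
      intro j hj
      exact i6 j (Finset.mem_range.1 (hJ hj))
    calc J.card ≤ (Finset.range P.length).card := by
          apply Finset.card_le_card_of_injOn (fun j => P.findIdx (fun p => decide (j ∈ p)))
          · intro j hj
            obtain ⟨p, hp, hjp⟩ := key j hj
            exact Finset.mem_range.2
              (List.findIdx_lt_length_of_exists ⟨p, hp, by simpa using hjp⟩)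
          · intro j1 hj1 j2 hj2 heq
            simp only [Finset.mem_coe] at hj1 hj2
            have hl1 : P.findIdx (fun p => decide (j1 ∈ p)) < P.length := by
              obtain ⟨p, hp, hjp⟩ := key j1 hj1
              exact List.findIdx_lt_length_of_exists ⟨p, hp, by simpa using hjp⟩
            have hl2 : P.findIdx (fun p => decide (j2 ∈ p)) < P.length := by
              obtain ⟨p, hp, hjp⟩ := key j2 hj2
              exact List.findIdx_lt_length_of_exists ⟨p, hp, by simpa using hjp⟩
            have hm1 : j1 ∈ P[P.findIdx (fun p => decide (j1 ∈ p))]'hl1 := by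
              have := List.findIdx_getElem (p := fun p => decide (j1 ∈ p)) (xs := P) (w := hl1)
              simpa using this
            have hm2 : j2 ∈ P[P.findIdx (fun p => decide (j2 ∈ p))]'hl2 := by
              have := List.findIdx_getElem (p := fun p => decide (j2 ∈ p)) (xs := P) (w := hl2)
              simpa using this
            have hm2' : j2 ∈ P[P.findIdx (fun p => decide (j1 ∈ p))]'hl1 := by
              simp only [heq] at *
              exact hm2
            set q := P[P.findIdx (fun p => decide (j1 ∈ p))]'hl1 with hq
            have hqP : q ∈ P := List.getElem_mem hl1
            by_contra hne
            rcases lt_trichotomy j1 j2 with h | h | h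
            · have h1 : a j1 < a j2 := hJf j1 hj1 j2 hj2 h
              have h2 : a j2 < a j1 := pile_value_lt (i4 q hqP) hm1 hm2' h
              omega
            · exact hne h
            · have h1 : a j2 < a j1 := hJf j2 hj2 j1 hj1 h
              have h2 : a j1 < a j2 := pile_value_lt (i4 q hqP) hm2' hm1 h
              omega
      _ = P.length := Finset.card_range _
end

section
/- Let A = (a_0, a_1, ..., a_n) with a_0 = 0 and (a_1, ..., a_n) a sequence of distinct integers between 1 and n, and let P_0, ..., P_k be the nonempty piles produced by patience sorting applied to A. If I and J are maximum feasible sets for A with I \ J = {u} and J \ I = {v}, then a_u and a_v belong to the same pile P_t for some 0 ≤ t ≤ k. -/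
lemma feasible_subset {a : ℕ → ℕ} {S T : Finset ℕ} (h : S ⊆ T) (hT : Feasible a T) :
    Feasible a S := fun i hi j hj hij => hT i (h hi) j (h hj) hij

open scoped Classical in
noncomputable def Lval (a : ℕ → ℕ) (i : ℕ) : ℕ :=
  ((Finset.range (i+1)).powerset.filter (fun S => i ∈ S ∧ Feasible a S)).sup Finset.card

lemma Lval_ge {a : ℕ → ℕ} {i : ℕ} {S : Finset ℕ} (hS : S ⊆ Finset.range (i+1))
    (hi : i ∈ S) (hf : Feasible a S) : S.card ≤ Lval a i := by
  classical
  refine Finset.le_sup ?_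
  simp only [Finset.mem_filter, Finset.mem_powerset]
  exact ⟨hS, hi, hf⟩

lemma Lval_exists (a : ℕ → ℕ) (i : ℕ) :
    ∃ S, S ⊆ Finset.range (i+1) ∧ i ∈ S ∧ Feasible a S ∧ S.card = Lval a i := by
  classical
  have hne : (((Finset.range (i+1)).powerset.filter (fun S => i ∈ S ∧ Feasible a S))).Nonempty := by
    refine ⟨{i}, ?_⟩
    simp only [Finset.mem_filter, Finset.mem_powerset]
    refine ⟨Finset.singleton_subset_iff.2 (Finset.mem_range.2 (Nat.lt_succ_self i)),
      Finset.mem_singleton_self i, ?_⟩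
    intro x hx y hy hxy
    simp only [Finset.mem_singleton] at hx hy
    omega
  obtain ⟨S, hS, hsup⟩ := Finset.exists_mem_eq_sup _ hne Finset.card
  simp only [Finset.mem_filter, Finset.mem_powerset] at hS
  exact ⟨S, hS.1, hS.2.1, hS.2.2, by rw [Lval]; convert hsup.symm⟩

lemma one_le_Lval (a : ℕ → ℕ) (i : ℕ) : 1 ≤ Lval a i := by
  have := Lval_ge (a := a) (i := i) (S := {i})
    (Finset.singleton_subset_iff.2 (Finset.mem_range.2 (Nat.lt_succ_self i)))
    (Finset.mem_singleton_self i) (by intro x hx y hy hxy; simp only [Finset.mem_singleton] at hx hy; omega)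
  simpa using this

lemma Lval_succ_le {a : ℕ → ℕ} {j i : ℕ} (hj : j < i) (hji : a j < a i) :
    Lval a j + 1 ≤ Lval a i := by
  obtain ⟨S, hS, hjS, hfS, hcard⟩ := Lval_exists a j
  have hiS : i ∉ S := fun h => by have := Finset.mem_range.1 (hS h); omega
  have hsub : insert i S ⊆ Finset.range (i+1) := by
    intro x hx
    rcases Finset.mem_insert.1 hx with h | h
    · rw [h]; exact Finset.mem_range.2 (Nat.lt_succ_self i)
    · exact Finset.mem_range.2 (by have := Finset.mem_range.1 (hS h); omega)
  have key : ∀ x ∈ S, a x < a i := by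
    intro x hx
    rcases eq_or_lt_of_le (Nat.lt_succ_iff.1 (Finset.mem_range.1 (hS hx))) with h | h
    · rw [h]; exact hji
    · exact lt_trans (hfS x hx j hjS h) hji
  have hfeas : Feasible a (insert i S) := by
    intro x hx y hy hxy
    rcases Finset.mem_insert.1 hx with hx' | hx' <;> rcases Finset.mem_insert.1 hy with hy' | hy'
    · omega
    · exfalso; have := Finset.mem_range.1 (hS hy'); omega
    · rw [hy']; exact key x hx'
    · exact hfS x hx' y hy' hxy
  have := Lval_ge hsub (Finset.mem_insert_self i S) hfeas
  rwa [Finset.card_insert_of_notMem hiS, hcard] at this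

lemma Lval_pred {a : ℕ → ℕ} {i : ℕ} (h2 : 2 ≤ Lval a i) :
    ∃ j, j < i ∧ a j < a i ∧ Lval a i ≤ Lval a j + 1 := by
  obtain ⟨S, hS, hiS, hfS, hcard⟩ := Lval_exists a i
  have hne : (S.erase i).Nonempty := by
    rw [← Finset.card_pos, Finset.card_erase_of_mem hiS]; omega
  set j := (S.erase i).max' hne with hjdef
  have hjmem : j ∈ S.erase i := Finset.max'_mem _ hne
  have hjS : j ∈ S := Finset.mem_of_mem_erase hjmem
  have hji : j ≠ i := Finset.ne_of_mem_erase hjmem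
  have hjlt : j < i := by
    have := Finset.mem_range.1 (hS hjS); omega
  refine ⟨j, hjlt, hfS j hjS i hiS hjlt, ?_⟩
  have hsub : S.erase i ⊆ Finset.range (j+1) := by
    intro x hx
    exact Finset.mem_range.2 (Nat.lt_succ_of_le (Finset.le_max' _ x hx))
  have := Lval_ge hsub hjmem (feasible_subset (Finset.erase_subset _ _) hfS)
  rw [Finset.card_erase_of_mem hiS, hcard] at this
  omega

lemma Lval_le_of_preds {a : ℕ → ℕ} {i B : ℕ}
    (hB : ∀ j, j < i → a j < a i → Lval a j ≤ B) : Lval a i ≤ B + 1 := by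
  by_contra h
  push_neg at h
  obtain ⟨j, hj, haj, hle⟩ := Lval_pred (a := a) (i := i) (by omega)
  have := hB j hj haj
  omega

section
variable {a : ℕ → ℕ} {n : ℕ} {I J : Finset ℕ} {u v : ℕ}

lemma lemA (hI : MaxFeasible a n I) {i : ℕ} (hi : i ∈ I) :
    Lval a i = (I.filter (fun x => x ≤ i)).card := by
  classical
  have hin : i ≤ n := by have := Finset.mem_range.1 (hI.1 hi); omega
  apply le_antisymm
  · obtain ⟨S, hS, hiS, hfS, hcard⟩ := Lval_exists a i
    set T := S ∪ I.filter (fun x => i < x) with hT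
    have hdisj : Disjoint S (I.filter (fun x => i < x)) := by
      rw [Finset.disjoint_left]
      intro x hx hx'
      have h1 := Finset.mem_range.1 (hS hx)
      have h2 := (Finset.mem_filter.1 hx').2
      omega
    have hTsub : T ⊆ Finset.range (n+1) := by
      intro x hx
      rcases Finset.mem_union.1 hx with h | h
      · have := Finset.mem_range.1 (hS h); exact Finset.mem_range.2 (by omega)
      · exact hI.1 (Finset.mem_filter.1 h).1
    have hTfeas : Feasible a T := by
      intro x hx y hy hxy
      rcases Finset.mem_union.1 hx with h1 | h1 <;> rcases Finset.mem_union.1 hy with h2 | h2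
      · exact hfS x h1 y h2 hxy
      · obtain ⟨hyI, hyi⟩ := Finset.mem_filter.1 h2
        have hxi : x ≤ i := by have := Finset.mem_range.1 (hS h1); omega
        rcases eq_or_lt_of_le hxi with h | h
        · rw [h]; exact hI.2.1 i hi y hyI (by omega)
        · exact lt_trans (hfS x h1 i hiS h) (hI.2.1 i hi y hyI hyi)
      · exfalso
        have := Finset.mem_range.1 (hS h2)
        have := (Finset.mem_filter.1 h1).2
        omega
      · exact hI.2.1 x (Finset.mem_filter.1 h1).1 y (Finset.mem_filter.1 h2).1 hxy
    have hcardT := hI.2.2 T hTsub hTfeas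
    rw [hT, Finset.card_union_of_disjoint hdisj, hcard] at hcardT
    have hsplit : (I.filter (fun x => x ≤ i)).card + (I.filter (fun x => i < x)).card = I.card := by
      have := Finset.card_filter_add_card_filter_not (s := I) (p := fun x => x ≤ i)
      simpa [Nat.not_le] using this
    omega
  · apply Lval_ge (a := a)
    · intro x hx
      exact Finset.mem_range.2 (by have := (Finset.mem_filter.1 hx).2; omega)
    · exact Finset.mem_filter.2 ⟨hi, le_refl i⟩
    · exact feasible_subset (Finset.filter_subset _ _) hI.2.1

lemma filter_le_eq (hu : I \ J = {u}) (huI : u ∈ I) :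
    I.filter (fun x => x ≤ u) = insert u ((I ∩ J).filter (fun x => x < u)) := by
  classical
  ext x
  simp only [Finset.mem_filter, Finset.mem_insert, Finset.mem_inter]
  constructor
  · rintro ⟨hxI, hxu⟩
    rcases eq_or_lt_of_le hxu with h | h
    · exact Or.inl h
    · refine Or.inr ⟨⟨hxI, ?_⟩, h⟩
      by_contra hxJ
      have : x ∈ I \ J := Finset.mem_sdiff.2 ⟨hxI, hxJ⟩
      rw [hu] at this
      have := Finset.mem_singleton.1 this
      omega
  · rintro (h | ⟨⟨hxI, _⟩, h⟩)
    · rw [h]; exact ⟨huI, le_refl u⟩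
    · exact ⟨hxI, le_of_lt h⟩

lemma keyNotLt (hI : MaxFeasible a n I) (hJ : MaxFeasible a n J)
    (hu : I \ J = {u}) (hv : J \ I = {v}) :
    ¬ ((I ∩ J).filter (fun x => x < u)).card < ((I ∩ J).filter (fun x => x < v)).card := by
  classical
  intro hlt
  have huI : u ∈ I ∧ u ∉ J := by
    have : u ∈ I \ J := by rw [hu]; exact Finset.mem_singleton_self u
    exact Finset.mem_sdiff.1 this
  have hvJ : v ∈ J ∧ v ∉ I := by
    have : v ∈ J \ I := by rw [hv]; exact Finset.mem_singleton_self v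
    exact Finset.mem_sdiff.1 this
  have hnsub : ¬ ((I ∩ J).filter (fun x => x < v)) ⊆ ((I ∩ J).filter (fun x => x < u)) := by
    intro h
    exact absurd (Finset.card_le_card h) (by omega)
  obtain ⟨c, hc, hc'⟩ := Finset.not_subset.1 hnsub
  obtain ⟨hcIJ, hcv⟩ := Finset.mem_filter.1 hc
  have hcu : ¬ c < u := fun h => hc' (Finset.mem_filter.2 ⟨hcIJ, h⟩)
  obtain ⟨hcI, hcJ⟩ := Finset.mem_inter.1 hcIJ
  have hcu' : u < c := by
    rcases eq_or_lt_of_le (Nat.le_of_not_lt hcu) with h | h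
    · exfalso; rw [← h] at hcJ; exact huI.2 hcJ
    · exact h
  have hauv : a u < a v :=
    lt_trans (hI.2.1 u huI.1 c hcI hcu') (hJ.2.1 c hcJ v hvJ.1 hcv)
  have huv : u < v := lt_trans hcu' hcv
  -- K = insert v I is feasible and bigger
  have hKfeas : Feasible a (insert v I) := by
    intro x hx y hy hxy
    rcases Finset.mem_insert.1 hx with h1 | h1 <;> rcases Finset.mem_insert.1 hy with h2 | h2
    · omega
    · -- x = v, y ∈ I, v < y
      rw [h1] at hxy ⊢
      have hyu : y ≠ u := by omega
      have hyJ : y ∈ J := by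
        by_contra hyJ
        have : y ∈ I \ J := Finset.mem_sdiff.2 ⟨h2, hyJ⟩
        rw [hu] at this
        exact hyu (Finset.mem_singleton.1 this)
      exact hJ.2.1 v hvJ.1 y hyJ hxy
    · -- y = v, x ∈ I
      rw [h2] at hxy ⊢
      rcases eq_or_ne x u with h | h
      · rw [h]; exact hauv
      · have hxJ : x ∈ J := by
          by_contra hxJ
          have : x ∈ I \ J := Finset.mem_sdiff.2 ⟨h1, hxJ⟩
          rw [hu] at this
          exact h (Finset.mem_singleton.1 this)
        exact hJ.2.1 x hxJ v hvJ.1 hxy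
    · exact hI.2.1 x h1 y h2 hxy
  have hKsub : insert v I ⊆ Finset.range (n+1) :=
    Finset.insert_subset (hJ.1 hvJ.1) hI.1
  have := hI.2.2 _ hKsub hKfeas
  rw [Finset.card_insert_of_notMem hvJ.2] at this
  omega

lemma Lval_eq_of_exchange (hI : MaxFeasible a n I) (hJ : MaxFeasible a n J)
    (hu : I \ J = {u}) (hv : J \ I = {v}) : Lval a u = Lval a v := by
  classical
  have huI : u ∈ I := by
    have : u ∈ I \ J := by rw [hu]; exact Finset.mem_singleton_self u
    exact (Finset.mem_sdiff.1 this).1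
  have hvJ : v ∈ J := by
    have : v ∈ J \ I := by rw [hv]; exact Finset.mem_singleton_self v
    exact (Finset.mem_sdiff.1 this).1
  have h1 := keyNotLt hI hJ hu hv
  have h2 := keyNotLt hJ hI hv hu
  rw [Finset.inter_comm] at h2
  have hpq : ((I ∩ J).filter (fun x => x < u)).card = ((I ∩ J).filter (fun x => x < v)).card := by
    omega
  have hLu : Lval a u = ((I ∩ J).filter (fun x => x < u)).card + 1 := by
    rw [lemA hI huI, filter_le_eq hu huI, Finset.card_insert_of_notMem]
    simp
  have hLv : Lval a v = ((I ∩ J).filter (fun x => x < v)).card + 1 := by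
    rw [lemA hJ hvJ, Finset.inter_comm] at *
    rw [filter_le_eq hv hvJ, Finset.card_insert_of_notMem]
    simp
  omega

end

lemma headI_mem {l : List ℕ} (h : l ≠ []) : l.headI ∈ l := by
  cases l with
  | nil => exact absurd rfl h
  | cons x xs => exact List.mem_cons_self

lemma place_spec (a : ℕ → ℕ) (i : ℕ) : ∀ (s : List (List ℕ)),
    (∃ t, ∃ h : t < s.length, (∀ r, (hr : r < s.length) → r < t → ¬ a i < a s[r].headI) ∧
      a i < a (s[t]).headI ∧ place a s i = s.set t (i :: s[t]))
    ∨ ((∀ t, (h : t < s.length) → ¬ a i < a s[t].headI) ∧ place a s i = s ++ [[i]])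
  | [] => Or.inr ⟨by simp, rfl⟩
  | p :: ps => by
    by_cases h : a i < a p.headI
    · left
      refine ⟨0, by simp, ?_, ?_, ?_⟩
      · intro r hr hr0; omega
      · simpa using h
      · simp [place, h]
    · rcases place_spec a i ps with ⟨t, ht, hlt, hgt, heq⟩ | ⟨hall, heq⟩
      · left
        refine ⟨t+1, by simpa using Nat.succ_lt_succ ht, ?_, ?_, ?_⟩
        · intro r hr hrt
          cases r with
          | zero => simpa using h
          | succ r' =>
            simp only [List.getElem_cons_succ]
            exact hlt r' (by simp at hr; omega) (by omega)
        · simpa using hgt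
        · simp only [place, h, if_false, heq, List.getElem_cons_succ]
          rfl
      · right
        refine ⟨?_, by simp [place, h, heq]⟩
        intro t ht
        cases t with
        | zero => simpa using h
        | succ t' =>
          simp only [List.getElem_cons_succ]
          exact hall t' (by simp at ht; omega)

structure PSInv (a : ℕ → ℕ) (m : ℕ) (s : List (List ℕ)) : Prop where
  mem : ∀ t, (h : t < s.length) → ∀ i ∈ s[t], i < m ∧ Lval a i = t + 1
  cover : ∀ i, i < m → ∃ t, ∃ h : t < s.length, i ∈ s[t]
  nonnil : ∀ t, (h : t < s.length) → s[t] ≠ []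
  hmin : ∀ t, (h : t < s.length) → ∀ i ∈ s[t], a (s[t].headI) ≤ a i
  mono : ∀ t₁ t₂, (h₂ : t₂ < s.length) → (hle : t₁ ≤ t₂) →
    a ((s[t₁]'(by omega)).headI) ≤ a (s[t₂].headI)

lemma inv_step {a : ℕ → ℕ} {n m : ℕ} (hm : m ≤ n)
    (hinj : ∀ x, x ≤ n → ∀ y, y ≤ n → a x = a y → x = y)
    {s : List (List ℕ)} (hs : PSInv a m s) : PSInv a (m+1) (place a s m) := by
  have hjlt : ∀ j, j < m → a j < a m → ∀ r, (hr : r < s.length) → j ∈ s[r] →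
      ¬ a (s[r].headI) ≤ a j → False := fun _ _ _ _ _ _ h => h (by exact hs.hmin _ _ _ ‹_›)
  rcases place_spec a m s with ⟨t0, h0, hlt, hgt, heq⟩ | ⟨hall, heq⟩
  · -- prepend to pile t0
    have hLm : Lval a m = t0 + 1 := by
      apply le_antisymm
      · apply Lval_le_of_preds
        intro j hj haj
        obtain ⟨r, hr, hjr⟩ := hs.cover j hj
        have hLj := (hs.mem r hr j hjr).2
        by_contra hcon
        have hrt : t0 ≤ r := by omega
        have h1 : a (s[t0].headI) ≤ a (s[r].headI) := hs.mono t0 r hr hrt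
        have h2 := hs.hmin r hr j hjr
        omega
      · cases t0 with
        | zero => exact one_le_Lval a m
        | succ t' =>
          have h' : t' < s.length := by omega
          set j := s[t'].headI with hjdef
          have hjm : j ∈ s[t'] := headI_mem (hs.nonnil t' h')
          obtain ⟨hjlt', hLj⟩ := hs.mem t' h' j hjm
          have hja : a j ≤ a m := Nat.le_of_not_lt (hlt t' h' (by omega))
          have hjne : a j ≠ a m := fun h => by
            have := hinj j (by omega) m hm h; omega
          have := Lval_succ_le hjlt' (lt_of_le_of_ne hja hjne)
          omega
    rw [heq]
    have hlen : (s.set t0 (m :: s[t0])).length = s.length := List.length_set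
    have hget : ∀ t, (h : t < s.length) →
        (s.set t0 (m :: s[t0]))[t]'(by omega) = if t0 = t then m :: s[t0] else s[t] := by
      intro t h
      exact List.getElem_set _
    constructor
    · intro t h i hi
      rw [hlen] at h
      rw [hget t h] at hi
      by_cases htt : t0 = t
      · rw [if_pos htt] at hi
        rcases List.mem_cons.1 hi with h1 | h1
        · subst h1
          exact ⟨Nat.lt_succ_self _, by rw [← htt]; exact hLm⟩
        · have := hs.mem t0 h0 i h1
          rw [htt] at this
          exact ⟨by omega, this.2⟩
      · rw [if_neg htt] at hi
        have := hs.mem t h i hi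
        exact ⟨by omega, this.2⟩
    · intro i hi
      rcases Nat.lt_succ_iff_lt_or_eq.1 hi with h1 | h1
      · obtain ⟨r, hr, hjr⟩ := hs.cover i h1
        refine ⟨r, by omega, ?_⟩
        rw [hget r hr]
        by_cases htt : t0 = r
        · subst htt
          rw [if_pos rfl]
          exact List.mem_cons_of_mem m hjr
        · rw [if_neg htt]; exact hjr
      · subst h1
        refine ⟨t0, by omega, ?_⟩
        rw [hget t0 h0, if_pos rfl]
        exact List.mem_cons_self
    · intro t h
      rw [hlen] at h
      rw [hget t h]
      by_cases htt : t0 = t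
      · rw [if_pos htt]; exact List.cons_ne_nil _ _
      · rw [if_neg htt]; exact hs.nonnil t h
    · intro t h i hi
      rw [hlen] at h
      rw [hget t h] at hi ⊢
      by_cases htt : t0 = t
      · rw [if_pos htt] at hi ⊢
        simp only [List.headI_cons]
        rcases List.mem_cons.1 hi with h1 | h1
        · rw [h1]
        · exact le_trans (le_of_lt hgt) (hs.hmin t0 h0 i h1)
      · rw [if_neg htt] at hi ⊢
        exact hs.hmin t h i hi
    · intro t₁ t₂ h₂ hle
      rw [hlen] at h₂
      have h₁ : t₁ < s.length := by omega
      rw [hget t₁ h₁, hget t₂ h₂]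
      by_cases ha1 : t0 = t₁ <;> by_cases ha2 : t0 = t₂
      · rw [if_pos ha1, if_pos ha2]
      · rw [if_pos ha1, if_neg ha2]
        simp only [List.headI_cons]
        exact le_trans (le_of_lt hgt) (hs.mono t0 t₂ h₂ (by omega))
      · rw [if_neg ha1, if_pos ha2]
        simp only [List.headI_cons]
        exact Nat.le_of_not_lt (hlt t₁ h₁ (by omega))
      · rw [if_neg ha1, if_neg ha2]
        exact hs.mono t₁ t₂ h₂ hle
  · -- new pile at the end
    have hLm : Lval a m = s.length + 1 := by
      apply le_antisymm
      · apply Lval_le_of_preds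
        intro j hj haj
        obtain ⟨r, hr, hjr⟩ := hs.cover j hj
        have hLj := (hs.mem r hr j hjr).2
        omega
      · cases hsl : s.length with
        | zero => simpa [hsl] using one_le_Lval a m
        | succ t' =>
          have h' : t' < s.length := by omega
          set j := s[t'].headI with hjdef
          have hjm : j ∈ s[t'] := headI_mem (hs.nonnil t' h')
          obtain ⟨hjlt', hLj⟩ := hs.mem t' h' j hjm
          have hja : a j ≤ a m := Nat.le_of_not_lt (hall t' h')
          have hjne : a j ≠ a m := fun h => by
            have := hinj j (by omega) m hm h; omega
          have := Lval_succ_le hjlt' (lt_of_le_of_ne hja hjne)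
          omega
    rw [heq]
    have hlen : (s ++ [[m]]).length = s.length + 1 := by simp
    have hget1 : ∀ t, (h : t < s.length) → (s ++ [[m]])[t]'(by simp; omega) = s[t] := by
      intro t h
      exact List.getElem_append_left h
    have hget2 : (s ++ [[m]])[s.length]'(by simp) = [m] := by
      simp
    constructor
    · intro t h i hi
      rw [hlen] at h
      rcases Nat.lt_succ_iff_lt_or_eq.1 h with h1 | h1
      · rw [hget1 t h1] at hi
        have := hs.mem t h1 i hi
        exact ⟨by omega, this.2⟩
      · subst h1
        rw [hget2] at hi
        have : i = m := by simpa using hi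
        subst this
        exact ⟨Nat.lt_succ_self _, hLm⟩
    · intro i hi
      rcases Nat.lt_succ_iff_lt_or_eq.1 hi with h1 | h1
      · obtain ⟨r, hr, hjr⟩ := hs.cover i h1
        exact ⟨r, by simp; omega, by rw [hget1 r hr]; exact hjr⟩
      · subst h1
        exact ⟨s.length, by simp, by rw [hget2]; exact List.mem_singleton_self _⟩
    · intro t h
      rw [hlen] at h
      rcases Nat.lt_succ_iff_lt_or_eq.1 h with h1 | h1
      · rw [hget1 t h1]; exact hs.nonnil t h1
      · subst h1; rw [hget2]; exact List.cons_ne_nil _ _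
    · intro t h i hi
      rw [hlen] at h
      rcases Nat.lt_succ_iff_lt_or_eq.1 h with h1 | h1
      · rw [hget1 t h1] at hi ⊢
        exact hs.hmin t h1 i hi
      · subst h1
        rw [hget2] at hi ⊢
        have : i = m := by simpa using hi
        subst this
        simp
    · intro t₁ t₂ h₂ hle
      rw [hlen] at h₂
      rcases Nat.lt_succ_iff_lt_or_eq.1 h₂ with h1 | h1
      · have h₁ : t₁ < s.length := by omega
        rw [hget1 t₁ h₁, hget1 t₂ h1]
        exact hs.mono t₁ t₂ h1 hle
      · subst h1
        rw [hget2]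
        rcases Nat.lt_succ_iff_lt_or_eq.1 (Nat.lt_succ_of_le hle) with h1 | h1
        · rw [hget1 t₁ h1]
          simp only [List.headI_cons]
          exact Nat.le_of_not_lt (hall t₁ h1)
        · subst h1
          rw [hget2]

lemma inv_pilesOf (a : ℕ → ℕ) (n : ℕ)
    (hinj : ∀ x, x ≤ n → ∀ y, y ≤ n → a x = a y → x = y) :
    ∀ m, m ≤ n + 1 → PSInv a m (pilesOf a (List.range m)) := by
  intro m
  induction m with
  | zero =>
    intro _
    have hz : pilesOf a (List.range 0) = [] := rfl
    rw [hz]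
    constructor
    · intro t h; simp at h
    · intro i hi; omega
    · intro t h; simp at h
    · intro t h; simp at h
    · intro t₁ t₂ h₂ _; simp at h₂
  | succ m ih =>
    intro h
    have h1 : pilesOf a (List.range (m+1)) = place a (pilesOf a (List.range m)) m := by
      rw [pilesOf, List.range_succ, List.foldl_append]
      rfl
    rw [h1]
    exact inv_step (by omega) hinj (ih (by omega))

/-- If `I` and `J` are maximum feasible sets for `a₀ = 0, a₁, …, aₙ` (where
`a₁, …, aₙ` are distinct integers between `1` and `n`) with `I \ J = {u}` and
`J \ I = {v}`, then `a u` and `a v` belong to the same pile produced by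
patience sorting. -/
theorem stmt6 (n : ℕ) (a : ℕ → ℕ) (hn : 0 < n) (h0 : a 0 = 0)
    (hmem : ∀ i ∈ Finset.Icc 1 n, a i ∈ Finset.Icc 1 n)
    (hinj : ∀ i ∈ Finset.Icc 1 n, ∀ j ∈ Finset.Icc 1 n, a i = a j → i = j)
    (I J : Finset ℕ) (hI : MaxFeasible a n I) (hJ : MaxFeasible a n J)
    (u v : ℕ) (hu : I \ J = {u}) (hv : J \ I = {v}) :
    ∃ p ∈ pilesOf a (List.range (n + 1)), u ∈ p ∧ v ∈ p := by
  have hinj' : ∀ x, x ≤ n → ∀ y, y ≤ n → a x = a y → x = y := by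
    intro x hx y hy hxy
    rcases Nat.eq_zero_or_pos x with hx0 | hx0 <;> rcases Nat.eq_zero_or_pos y with hy0 | hy0
    · omega
    · exfalso
      have := hmem y (Finset.mem_Icc.2 ⟨hy0, hy⟩)
      rw [← hxy, hx0, h0] at this
      simp [Finset.mem_Icc] at this
    · exfalso
      have := hmem x (Finset.mem_Icc.2 ⟨hx0, hx⟩)
      rw [hxy, hy0, h0] at this
      simp [Finset.mem_Icc] at this
    · exact hinj x (Finset.mem_Icc.2 ⟨hx0, hx⟩) y (Finset.mem_Icc.2 ⟨hy0, hy⟩) hxy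
  have hInv := inv_pilesOf a n hinj' (n+1) le_rfl
  have huI : u ∈ I := by
    have : u ∈ I \ J := by rw [hu]; exact Finset.mem_singleton_self u
    exact (Finset.mem_sdiff.1 this).1
  have hvJ : v ∈ J := by
    have : v ∈ J \ I := by rw [hv]; exact Finset.mem_singleton_self v
    exact (Finset.mem_sdiff.1 this).1
  have hun : u < n + 1 := Finset.mem_range.1 (hI.1 huI)
  have hvn : v < n + 1 := Finset.mem_range.1 (hJ.1 hvJ)
  obtain ⟨tu, htu, hmu⟩ := hInv.cover u hun
  obtain ⟨tv, htv, hmv⟩ := hInv.cover v hvn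
  have h1 := (hInv.mem tu htu u hmu).2
  have h2 := (hInv.mem tv htv v hmv).2
  have hL := Lval_eq_of_exchange hI hJ hu hv
  have htt : tu = tv := by omega
  subst htt
  exact ⟨(pilesOf a (List.range (n+1)))[tu], List.getElem_mem htu, hmu, hmv⟩
end

section
/- Let 𝓘 be the family of maximum feasible sets of A (extended with a_0 = 0) and let ⊲ be the relation on 𝓘 induced by the patience sorting piles. If I, J, J' ∈ 𝓘 satisfy J ⊲ I, J' ⊲ I, and J ≠ J', then at least one of the following holds: J' ⊲ J, or J ⊲ J', or there exists J'' ∈ 𝓘 with J'' ⊲ J and J'' ⊲ J'. -/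
/-- `u` is placed strictly below `v` in one of the piles: some pile (a list of
indices whose head is the top) has `v` at an earlier position than `u`. -/
def Below (piles : List (List ℕ)) (u v : ℕ) : Prop :=
  ∃ p ∈ piles, ∃ k l : ℕ, k < l ∧ p[k]? = some v ∧ p[l]? = some u

/-- The relation `I ⊲ J` on maximum feasible sets: `I \ J = {u}`,
`J \ I = {v}`, and `a u` is placed strictly below `a v` in the same pile of
the patience sorting of `a₀ = 0, a₁, …, aₙ`. -/
def PileLT (a : ℕ → ℕ) (n : ℕ) (I J : Finset ℕ) : Prop :=
  ∃ u v : ℕ, I \ J = {u} ∧ J \ I = {v} ∧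
    Below (pilesOf a (List.range (n + 1))) u v

/-- One step of `⊲` within the family of maximum feasible sets. -/
def StepLT (a : ℕ → ℕ) (n : ℕ) (I J : Finset ℕ) : Prop :=
  MaxFeasible a n I ∧ MaxFeasible a n J ∧ PileLT a n I J

/-- `J ∈ M(I)`: membership in the lower set of `I` in the transitive closure
of `⊲` within the family of maximum feasible sets; equivalently, `M(I)` is the
smallest family containing `I` and closed under taking `⊲`-smaller sets. -/
def InLowerSet (a : ℕ → ℕ) (n : ℕ) (J I : Finset ℕ) : Prop :=
  Relation.ReflTransGen (StepLT a n) J I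

/-- `I` is `⊲`-minimal among maximum feasible sets. -/
def MinimalLT (a : ℕ → ℕ) (n : ℕ) (I : Finset ℕ) : Prop :=
  ∀ J : Finset ℕ, MaxFeasible a n J → ¬ PileLT a n J I

namespace PSort

/-- Invariant of the pile configuration after processing `0, …, m-1`. -/
def Good (a : ℕ → ℕ) (m : ℕ) (piles : List (List ℕ)) : Prop :=
  (∀ p ∈ piles, p ≠ []) ∧ (∀ p ∈ piles, ∀ x ∈ p, x < m) ∧
  (∀ p ∈ piles, p.Pairwise (fun x y => y < x ∧ a x < a y))

theorem good_place {a : ℕ → ℕ} {m : ℕ} {piles : List (List ℕ)}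
    (h : Good a m piles) : Good a (m + 1) (place a piles m) := by
  induction piles with
  | nil =>
      refine ⟨?_, ?_, ?_⟩ <;> simp [place]
  | cons p ps ih =>
      obtain ⟨h1, h2, h3⟩ := h
      have hps : Good a m ps :=
        ⟨fun q hq => h1 q (List.mem_cons_of_mem _ hq),
         fun q hq => h2 q (List.mem_cons_of_mem _ hq),
         fun q hq => h3 q (List.mem_cons_of_mem _ hq)⟩
      have hpne : p ≠ [] := h1 p List.mem_cons_self
      have hpbd : ∀ x ∈ p, x < m := h2 p List.mem_cons_self
      have hppw : p.Pairwise (fun x y => y < x ∧ a x < a y) :=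
        h3 p List.mem_cons_self
      rw [place]
      by_cases hc : a m < a p.headI
      · rw [if_pos hc]
        obtain ⟨h1', h2', h3'⟩ := hps
        refine ⟨?_, ?_, ?_⟩
        · intro q hq
          rcases List.mem_cons.mp hq with rfl | hq
          · simp
          · exact h1' q hq
        · intro q hq
          rcases List.mem_cons.mp hq with rfl | hq
          · intro x hx
            rcases List.mem_cons.mp hx with rfl | hx
            · omega
            · exact lt_trans (hpbd x hx) (Nat.lt_succ_self m)
          · intro x hx
            exact lt_trans (h2' q hq x hx) (Nat.lt_succ_self m)
        · intro q hq
          rcases List.mem_cons.mp hq with rfl | hq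
          · rw [List.pairwise_cons]
            refine ⟨?_, hppw⟩
            intro y hy
            refine ⟨hpbd y hy, ?_⟩
            obtain ⟨z, t, rfl⟩ := List.exists_cons_of_ne_nil hpne
            simp only [List.headI] at hc
            rcases List.mem_cons.mp hy with rfl | hy
            · exact hc
            · have := (List.pairwise_cons.mp hppw).1 y hy
              exact lt_trans hc this.2
          · exact h3' q hq
      · rw [if_neg hc]
        obtain ⟨h1', h2', h3'⟩ := ih hps
        refine ⟨?_, ?_, ?_⟩
        · intro q hq
          rcases List.mem_cons.mp hq with rfl | hq
          · exact hpne
          · exact h1' q hq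
        · intro q hq
          rcases List.mem_cons.mp hq with rfl | hq
          · intro x hx; exact lt_trans (hpbd x hx) (Nat.lt_succ_self m)
          · exact h2' q hq
        · intro q hq
          rcases List.mem_cons.mp hq with rfl | hq
          · exact hppw
          · exact h3' q hq

theorem good_foldl {a : ℕ → ℕ} :
    ∀ (k s : ℕ) (piles : List (List ℕ)), Good a s piles →
      Good a (s + k) (List.foldl (place a) piles (List.range' s k)) := by
  intro k
  induction k with
  | zero => intro s piles h; simpa using h
  | succ k ih =>
      intro s piles h
      rw [List.range'_succ]
      have := ih (s + 1) (place a piles s) (good_place h)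
      simpa [Nat.add_assoc, Nat.add_comm 1 k] using this

theorem good_pilesOf {a : ℕ → ℕ} (n : ℕ) :
    Good a (n + 1) (pilesOf a (List.range (n + 1))) := by
  have h0 : Good a 0 ([] : List (List ℕ)) := ⟨by simp, by simp, by simp⟩
  have := good_foldl (a := a) (n + 1) 0 [] h0
  simpa [pilesOf, List.range_eq_range'] using this

theorem place_flatten_perm (a : ℕ → ℕ) (i : ℕ) :
    ∀ piles : List (List ℕ), (place a piles i).flatten.Perm (i :: piles.flatten) := by
  intro piles
  induction piles with
  | nil => simp [place]
  | cons p ps ih =>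
      rw [place]
      by_cases hc : a i < a p.headI
      · rw [if_pos hc]; simp
      · rw [if_neg hc]
        have h1 : (p :: place a ps i).flatten = p ++ (place a ps i).flatten := by simp
        have h2 : (p ++ (place a ps i).flatten).Perm (p ++ (i :: ps.flatten)) :=
          ih.append_left p
        have h3 : (p ++ (i :: ps.flatten)).Perm (i :: (p ++ ps.flatten)) :=
          List.perm_middle
        rw [h1]
        exact (h2.trans h3).trans (by simp)

theorem foldl_flatten_perm (a : ℕ → ℕ) :
    ∀ (l : List ℕ) (piles : List (List ℕ)),
      (List.foldl (place a) piles l).flatten.Perm (l ++ piles.flatten) := by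
  intro l
  induction l with
  | nil => intro piles; simp
  | cons x l ih =>
      intro piles
      have h1 : (List.foldl (place a) piles (x :: l)).flatten
            = (List.foldl (place a) (place a piles x) l).flatten := by simp
      have h2 := ih (place a piles x)
      have h3 : (l ++ (place a piles x).flatten).Perm (l ++ (x :: piles.flatten)) :=
        (place_flatten_perm a x piles).append_left l
      have h4 : (l ++ (x :: piles.flatten)).Perm (x :: (l ++ piles.flatten)) :=
        List.perm_middle
      rw [h1]
      exact ((h2.trans h3).trans h4)

theorem nodup_flatten_pilesOf (a : ℕ → ℕ) (n : ℕ) :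
    (pilesOf a (List.range (n + 1))).flatten.Nodup := by
  have h := foldl_flatten_perm a (List.range (n + 1)) []
  have : (pilesOf a (List.range (n + 1))).flatten.Perm (List.range (n + 1)) := by
    simpa [pilesOf] using h
  exact this.nodup_iff.mpr List.nodup_range

/-- The two pile facts extracted from a `Below` witness. -/
theorem below_facts {a : ℕ → ℕ} {n u v : ℕ}
    (h : Below (pilesOf a (List.range (n + 1))) u v) : u < v ∧ a v < a u := by
  obtain ⟨p, hp, k, l, hkl, hk, hl⟩ := h
  have hpw := (good_pilesOf (a := a) n).2.2 p hp
  rw [List.getElem?_eq_some_iff] at hk hl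
  obtain ⟨hk1, hk2⟩ := hk
  obtain ⟨hl1, hl2⟩ := hl
  have := List.pairwise_iff_getElem.mp hpw k l hk1 hl1 hkl
  rw [hk2, hl2] at this
  exact this

theorem same_pile {piles : List (List ℕ)} {u : ℕ} {p p' : List ℕ}
    (hnd : piles.flatten.Nodup) (hp : p ∈ piles) (hp' : p' ∈ piles)
    (hu : u ∈ p) (hu' : u ∈ p') : p = p' := by
  by_contra hne
  have hdisj := (List.nodup_flatten.mp hnd).2
  haveI : Std.Symm (List.Disjoint (α := ℕ)) := ⟨fun _ _ h => List.Disjoint.symm h⟩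
  have := hdisj.forall hp hp' hne
  exact this hu hu'

/-- Two indices lying below a common element `v` lie in a common pile, hence
are comparable. -/
theorem below_comparable {a : ℕ → ℕ} {n u u' v : ℕ}
    (hb : Below (pilesOf a (List.range (n + 1))) u v)
    (hb' : Below (pilesOf a (List.range (n + 1))) u' v)
    (hne : u ≠ u') :
    Below (pilesOf a (List.range (n + 1))) u u' ∨
      Below (pilesOf a (List.range (n + 1))) u' u := by
  obtain ⟨p, hp, k, l, hkl, hk, hl⟩ := hb
  obtain ⟨p', hp', k', l', hkl', hk', hl'⟩ := hb'
  have hnd := nodup_flatten_pilesOf a n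
  have hpp : p = p' :=
    same_pile hnd hp hp' (List.mem_of_getElem? hk) (List.mem_of_getElem? hk')
  subst hpp
  have hll : l ≠ l' := by
    intro h; subst h
    rw [hl] at hl'
    exact hne (Option.some_injective _ hl')
  rcases lt_or_gt_of_ne hll with h | h
  · exact Or.inr ⟨p, hp, l, l', h, hl, hl'⟩
  · exact Or.inl ⟨p, hp, l', l, h, hl', hl⟩

/-- A common element `u` below both `v` and `v'`, with `v, v'` in a feasible
set, forces `v = v'`. -/
theorem below_unique_top {a : ℕ → ℕ} {n u v v' : ℕ} {I : Finset ℕ}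
    (hb : Below (pilesOf a (List.range (n + 1))) u v)
    (hb' : Below (pilesOf a (List.range (n + 1))) u v')
    (hfeas : ∀ i ∈ I, ∀ j ∈ I, i < j → a i < a j)
    (hv : v ∈ I) (hv' : v' ∈ I) : v = v' := by
  obtain ⟨p, hp, k, l, hkl, hk, hl⟩ := hb
  obtain ⟨p', hp', k', l', hkl', hk', hl'⟩ := hb'
  have hnd := nodup_flatten_pilesOf a n
  have hpp : p = p' :=
    same_pile hnd hp hp' (List.mem_of_getElem? hl) (List.mem_of_getElem? hl')
  subst hpp
  by_contra hne
  have hkk : k ≠ k' := by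
    intro h; subst h
    rw [hk] at hk'
    exact hne (Option.some_injective _ hk')
  have hpw := (good_pilesOf (a := a) n).2.2 p hp
  rw [List.getElem?_eq_some_iff] at hk hk'
  obtain ⟨hk1, hk2⟩ := hk
  obtain ⟨hk1', hk2'⟩ := hk'
  rcases lt_or_gt_of_ne hkk with h | h
  · have h2 := List.pairwise_iff_getElem.mp hpw k k' hk1 hk1' h
    rw [hk2, hk2'] at h2
    exact absurd (hfeas v' hv' v hv h2.1) (not_lt.mpr h2.2.le)
  · have h2 := List.pairwise_iff_getElem.mp hpw k' k hk1' hk1 h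
    rw [hk2, hk2'] at h2
    exact absurd (hfeas v hv v' hv' h2.1) (not_lt.mpr h2.2.le)

end PSort

/-- If `I, J, J'` are maximum feasible sets with `J ⊲ I`, `J' ⊲ I` and
`J ≠ J'`, then `J' ⊲ J`, or `J ⊲ J'`, or some maximum feasible set `J''`
satisfies `J'' ⊲ J` and `J'' ⊲ J'`. -/
theorem stmt7 (n : ℕ) (a : ℕ → ℕ) (hn : 0 < n) (h0 : a 0 = 0)
    (hmem : ∀ i ∈ Finset.Icc 1 n, a i ∈ Finset.Icc 1 n)
    (hinj : ∀ i ∈ Finset.Icc 1 n, ∀ j ∈ Finset.Icc 1 n, a i = a j → i = j)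
    (I J J' : Finset ℕ)
    (hI : MaxFeasible a n I) (hJ : MaxFeasible a n J) (hJ' : MaxFeasible a n J')
    (h1 : PileLT a n J I) (h2 : PileLT a n J' I) (hne : J ≠ J') :
    PileLT a n J' J ∨ PileLT a n J J' ∨
      ∃ J'' : Finset ℕ, MaxFeasible a n J'' ∧
        PileLT a n J'' J ∧ PileLT a n J'' J' := by
  obtain ⟨u, v, hJI, hIJ, hbuv⟩ := h1
  obtain ⟨u', v', hJI', hIJ', hbuv'⟩ := h2
  have d1 : ∀ x, x ∈ J ∧ x ∉ I ↔ x = u := fun x => by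
    simpa [Finset.mem_sdiff] using Finset.ext_iff.mp hJI x
  have d2 : ∀ x, x ∈ I ∧ x ∉ J ↔ x = v := fun x => by
    simpa [Finset.mem_sdiff] using Finset.ext_iff.mp hIJ x
  have d3 : ∀ x, x ∈ J' ∧ x ∉ I ↔ x = u' := fun x => by
    simpa [Finset.mem_sdiff] using Finset.ext_iff.mp hJI' x
  have d4 : ∀ x, x ∈ I ∧ x ∉ J' ↔ x = v' := fun x => by
    simpa [Finset.mem_sdiff] using Finset.ext_iff.mp hIJ' x
  have huJ : u ∈ J := ((d1 u).mpr rfl).1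
  have hunI : u ∉ I := ((d1 u).mpr rfl).2
  have hvI : v ∈ I := ((d2 v).mpr rfl).1
  have hvnJ : v ∉ J := ((d2 v).mpr rfl).2
  have hu'J' : u' ∈ J' := ((d3 u').mpr rfl).1
  have hu'nI : u' ∉ I := ((d3 u').mpr rfl).2
  have hv'I : v' ∈ I := ((d4 v').mpr rfl).1
  have hv'nJ' : v' ∉ J' := ((d4 v').mpr rfl).2
  have hJc : ∀ x, x ∈ J ↔ (x ∈ I ∧ x ≠ v) ∨ x = u := by
    intro x
    constructor
    · intro hx
      by_cases hxI : x ∈ I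
      · exact Or.inl ⟨hxI, fun e => hvnJ (e ▸ hx)⟩
      · exact Or.inr ((d1 x).mp ⟨hx, hxI⟩)
    · rintro (⟨hxI, hxv⟩ | rfl)
      · by_contra hxJ
        exact hxv ((d2 x).mp ⟨hxI, hxJ⟩)
      · exact huJ
  have hJ'c : ∀ x, x ∈ J' ↔ (x ∈ I ∧ x ≠ v') ∨ x = u' := by
    intro x
    constructor
    · intro hx
      by_cases hxI : x ∈ I
      · exact Or.inl ⟨hxI, fun e => hv'nJ' (e ▸ hx)⟩
      · exact Or.inr ((d3 x).mp ⟨hx, hxI⟩)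
    · rintro (⟨hxI, hxv⟩ | rfl)
      · by_contra hxJ'
        exact hxv ((d4 x).mp ⟨hxI, hxJ'⟩)
      · exact hu'J'
  by_cases hvv : v = v'
  · -- same top element: u and u' are comparable in the common pile
    subst hvv
    have hune : u ≠ u' := by
      intro h
      subst h
      exact hne (Finset.ext fun x => (hJc x).trans (hJ'c x).symm)
    have hJJ' : J \ J' = {u} := by
      ext x
      simp only [Finset.mem_sdiff, Finset.mem_singleton, hJc x, hJ'c x]
      constructor
      · rintro ⟨⟨hxI, hxv⟩ | rfl, hn⟩
        · exact absurd (Or.inl ⟨hxI, hxv⟩) hn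
        · rfl
      · rintro rfl
        refine ⟨Or.inr rfl, ?_⟩
        rintro (⟨hxI, _⟩ | e)
        · exact hunI hxI
        · exact hune e
    have hJ'J : J' \ J = {u'} := by
      ext x
      simp only [Finset.mem_sdiff, Finset.mem_singleton, hJc x, hJ'c x]
      constructor
      · rintro ⟨⟨hxI, hxv⟩ | rfl, hn⟩
        · exact absurd (Or.inl ⟨hxI, hxv⟩) hn
        · rfl
      · rintro rfl
        refine ⟨Or.inr rfl, ?_⟩
        rintro (⟨hxI, _⟩ | e)
        · exact hu'nI hxI
        · exact hune e.symm
    rcases PSort.below_comparable hbuv hbuv' hune with hb | hb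
    · exact Or.inr (Or.inl ⟨u, u', hJJ', hJ'J, hb⟩)
    · exact Or.inl ⟨u', u, hJ'J, hJJ', hb⟩
  · -- different top elements: take J'' = (I \ {v, v'}) ∪ {u, u'}
    have hune : u ≠ u' := by
      intro h
      subst h
      exact hvv (PSort.below_unique_top hbuv hbuv' hI.2.1 hvI hv'I)
    have huv' : u ≠ v' := fun e => hunI (e ▸ hv'I)
    have hu'v : u' ≠ v := fun e => hu'nI (e ▸ hvI)
    have hv'u' : v' ≠ u' := fun e => hu'nI (e ▸ hv'I)
    have hv'J : v' ∈ J := (hJc v').mpr (Or.inl ⟨hv'I, fun e => hvv e.symm⟩)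
    have hvJ' : v ∈ J' := (hJ'c v).mpr (Or.inl ⟨hvI, hvv⟩)
    have hu'nJ : u' ∉ J := by
      intro h
      rcases (hJc u').mp h with ⟨hxI, _⟩ | e
      · exact hu'nI hxI
      · exact hune e.symm
    have hunJ' : u ∉ J' := by
      intro h
      rcases (hJ'c u).mp h with ⟨hxI, _⟩ | e
      · exact hunI hxI
      · exact hune e
    have huv := PSort.below_facts hbuv
    have hu'v' := PSort.below_facts hbuv'
    set J'' : Finset ℕ := insert u' (J.erase v') with hJ''def
    have hJ''c : ∀ x, x ∈ J'' ↔ x = u' ∨ (x ∈ J ∧ x ≠ v') := by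
      intro x
      simp only [hJ''def, Finset.mem_insert, Finset.mem_erase]
      tauto
    have hmax : MaxFeasible a n J'' := by
      refine ⟨?_, ?_, ?_⟩
      · intro x hx
        rcases (hJ''c x).mp hx with rfl | ⟨hxJ, _⟩
        · exact hJ'.1 hu'J'
        · exact hJ.1 hxJ
      · intro i hi j hj hij
        rcases (hJ''c i).mp hi with rfl | ⟨hiJ, hiv'⟩
        · rcases (hJ''c j).mp hj with rfl | ⟨hjJ, hjv'⟩
          · exact absurd hij (lt_irrefl _)
          · rcases (hJc j).mp hjJ with ⟨hjI, hjv⟩ | rfl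
            · exact hJ'.2.1 i hu'J' j ((hJ'c j).mpr (Or.inl ⟨hjI, hjv'⟩)) hij
            · have h1 : i < v := lt_trans hij huv.1
              exact lt_trans (hJ'.2.1 i hu'J' v hvJ' h1) huv.2
        · rcases (hJ''c j).mp hj with rfl | ⟨hjJ, hjv'⟩
          · rcases (hJc i).mp hiJ with ⟨hiI, hiv⟩ | rfl
            · exact hJ'.2.1 i ((hJ'c i).mpr (Or.inl ⟨hiI, hiv'⟩)) j hu'J' hij
            · have h1 : i < v' := lt_trans hij hu'v'.1
              exact lt_trans (hJ.2.1 i huJ v' hv'J h1) hu'v'.2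
          · exact hJ.2.1 i hiJ j hjJ hij
      · intro K hK hKf
        have hle := hJ.2.2 K hK hKf
        have h1 : u' ∉ J.erase v' := fun h => hu'nJ (Finset.mem_of_mem_erase h)
        have hcard : J''.card = J.card := by
          rw [hJ''def, Finset.card_insert_of_notMem h1,
            Finset.card_erase_of_mem hv'J]
          have : 0 < J.card := Finset.card_pos.mpr ⟨v', hv'J⟩
          omega
        rw [hcard]
        exact hle
    have hpl1 : PileLT a n J'' J := by
      refine ⟨u', v', ?_, ?_, hbuv'⟩
      · ext x
        simp only [Finset.mem_sdiff, Finset.mem_singleton, hJ''c x]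
        constructor
        · rintro ⟨rfl | ⟨hxJ, _⟩, hnJ⟩
          · rfl
          · exact absurd hxJ hnJ
        · rintro rfl
          exact ⟨Or.inl rfl, hu'nJ⟩
      · ext x
        simp only [Finset.mem_sdiff, Finset.mem_singleton, hJ''c x]
        constructor
        · rintro ⟨hxJ, hn⟩
          by_contra hxv'
          exact hn (Or.inr ⟨hxJ, hxv'⟩)
        · rintro rfl
          refine ⟨hv'J, ?_⟩
          rintro (e | ⟨_, e⟩)
          · exact hv'u' e
          · exact e rfl
    have hpl2 : PileLT a n J'' J' := by
      refine ⟨u, v, ?_, ?_, hbuv⟩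
      · ext x
        simp only [Finset.mem_sdiff, Finset.mem_singleton, hJ''c x]
        constructor
        · rintro ⟨rfl | ⟨hxJ, hxv'⟩, hnJ'⟩
          · exact absurd hu'J' hnJ'
          · rcases (hJc x).mp hxJ with ⟨hxI, hxv⟩ | rfl
            · exact absurd ((hJ'c x).mpr (Or.inl ⟨hxI, hxv'⟩)) hnJ'
            · rfl
        · rintro rfl
          exact ⟨Or.inr ⟨huJ, huv'⟩, hunJ'⟩
      · ext x
        simp only [Finset.mem_sdiff, Finset.mem_singleton, hJ''c x]
        constructor
        · rintro ⟨hxJ', hn⟩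
          rcases (hJ'c x).mp hxJ' with ⟨hxI, hxv'⟩ | rfl
          · by_contra hxv
            exact hn (Or.inr ⟨(hJc x).mpr (Or.inl ⟨hxI, hxv⟩), hxv'⟩)
          · exact absurd (Or.inl rfl) hn
        · rintro rfl
          refine ⟨hvJ', ?_⟩
          rintro (e | ⟨hvJ, _⟩)
          · exact hu'v e.symm
          · exact hvnJ hvJ
    exact Or.inr (Or.inr ⟨J'', hmax, hpl1, hpl2⟩)
end

section
/- Let 𝓘 be the family of maximum feasible sets of A (extended with a_0 = 0), let ⊲ be the relation on 𝓘 induced by the patience sorting piles, and for I ∈ 𝓘 let M(I) be the lower set of I in the transitive closure of ⊲. Then for every I ∈ 𝓘, the family M(I) contains exactly one ⊲-minimal set. -/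
namespace Stmt8

theorem headI_mem {l : List ℕ} (h : l ≠ []) : l.headI ∈ l := by
  obtain ⟨x, t, rfl⟩ := List.exists_cons_of_ne_nil h
  simp

/-- cross-pile relation: every element of the right pile has a smaller,
a-smaller element in the left pile. -/
def Rel (a : ℕ → ℕ) (p q : List ℕ) : Prop := ∀ y ∈ q, ∃ x ∈ p, x < y ∧ a x < a y

def Inv (a : ℕ → ℕ) (piles : List (List ℕ)) : Prop :=
  (∀ p ∈ piles, p ≠ []) ∧
  (∀ p ∈ piles, p.Pairwise (fun x y => y < x ∧ a x < a y)) ∧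
  List.IsChain (Rel a) piles

theorem flatten_place (a : ℕ → ℕ) : ∀ (piles : List (List ℕ)) (i : ℕ),
    (place a piles i).flatten.Perm (i :: piles.flatten) := by
  intro piles
  induction piles with
  | nil => intro i; simp [place]
  | cons p ps ih =>
    intro i
    rw [place]
    split_ifs with h
    · simp
    · simp only [List.flatten_cons]
      exact ((ih i).append_left p).trans List.perm_middle

theorem place_inv (a : ℕ → ℕ) : ∀ (piles : List (List ℕ)) (i : ℕ),
    Inv a piles → (∀ x ∈ piles.flatten, x < i) → (∀ x ∈ piles.flatten, a x ≠ a i) →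
    Inv a (place a piles i) := by
  intro piles
  induction piles with
  | nil =>
    intro i _ _ _
    refine ⟨by simp [place], by simp [place], by simp [place]⟩
  | cons p ps ih =>
    intro i ⟨hne, hpw, hch⟩ hlt hinja
    have hpne : p ≠ [] := hne p (by simp)
    have hheadmem : p.headI ∈ p := headI_mem hpne
    have hheadflat : p.headI ∈ (p :: ps).flatten := by
      simp only [List.flatten_cons, List.mem_append]; exact Or.inl hheadmem
    rw [place]
    split_ifs with h
    · -- i goes on top of p
      have hi_lt : ∀ y ∈ p, y < i ∧ a i < a y := by
        intro y hy
        refine ⟨hlt y (by simp only [List.flatten_cons, List.mem_append]; exact Or.inl hy), ?_⟩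
        rcases eq_or_ne y p.headI with rfl | hne'
        · exact h
        · have hpw' : p.Pairwise (fun x y => y < x ∧ a x < a y) := hpw p (by simp)
          obtain ⟨hd, tl, rfl⟩ := List.exists_cons_of_ne_nil hpne
          simp only [List.headI_cons] at hne' h
          rcases List.mem_cons.mp hy with rfl | hy'
          · exact absurd rfl hne'
          · have := (List.pairwise_cons.mp hpw').1 y hy'
            exact lt_trans h this.2
      refine ⟨?_, ?_, ?_⟩
      · intro q hq
        rcases List.mem_cons.mp hq with rfl | hq
        · simp
        · exact hne _ (by simp [hq])
      · intro q hq
        rcases List.mem_cons.mp hq with rfl | hq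
        · exact List.Pairwise.cons hi_lt (hpw p (by simp))
        · exact hpw _ (by simp [hq])
      · rw [List.isChain_cons] at hch ⊢
        refine ⟨?_, hch.2⟩
        intro b hb y hy
        obtain ⟨x, hx, h1, h2⟩ := hch.1 b hb y hy
        exact ⟨x, by simp [hx], h1, h2⟩
    · -- i goes further right
      have htop : a p.headI < a i := by
        have h1 := hinja p.headI hheadflat
        omega
      have htopi : p.headI < i := hlt _ hheadflat
      have ihps := ih i ⟨fun q hq => hne q (by simp [hq]),
        fun q hq => hpw q (by simp [hq]), (List.isChain_cons.mp hch).2⟩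
        (fun x hx => hlt x (by simp only [List.flatten_cons, List.mem_append]; exact Or.inr hx))
        (fun x hx => hinja x (by simp only [List.flatten_cons, List.mem_append]; exact Or.inr hx))
      obtain ⟨ine, ipw, ich⟩ := ihps
      refine ⟨?_, ?_, ?_⟩
      · intro q hq
        rcases List.mem_cons.mp hq with rfl | hq
        · exact hpne
        · exact ine _ hq
      · intro q hq
        rcases List.mem_cons.mp hq with rfl | hq
        · exact hpw q (by simp)
        · exact ipw _ hq
      · rw [List.isChain_cons]
        refine ⟨?_, ich⟩
        intro b hb y hy
        match ps with
        | [] =>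
          simp [place] at hb
          subst hb
          simp at hy
          subst hy
          exact ⟨p.headI, hheadmem, htopi, htop⟩
        | p2 :: ps2 =>
          have hrel : Rel a p p2 := (List.isChain_cons.mp hch).1 p2 (by simp)
          rw [place] at hb
          split_ifs at hb with h2
          · simp at hb
            subst hb
            rcases List.mem_cons.mp hy with rfl | hy'
            · exact ⟨p.headI, hheadmem, htopi, htop⟩
            · exact hrel y hy'
          · simp at hb
            subst hb
            exact hrel y hy

theorem pilesOf_inv (a : ℕ → ℕ) (m : ℕ)
    (hd : ∀ i j, i < m → j < m → a i = a j → i = j) :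
    Inv a (pilesOf a (List.range m)) ∧
      (pilesOf a (List.range m)).flatten.Perm (List.range m) := by
  induction m with
  | zero =>
    refine ⟨⟨?_, ?_, ?_⟩, ?_⟩ <;> simp [pilesOf]
  | succ m ih =>
    have hd' : ∀ i j, i < m → j < m → a i = a j → i = j := fun i j hi hj =>
      hd i j (by omega) (by omega)
    obtain ⟨inv, perm⟩ := ih hd'
    have hstep : pilesOf a (List.range (m+1)) = place a (pilesOf a (List.range m)) m := by
      rw [pilesOf, List.range_succ, List.foldl_append]
      rfl
    have hmem : ∀ x ∈ (pilesOf a (List.range m)).flatten, x < m := by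
      intro x hx
      have := perm.mem_iff.mp hx
      simpa using this
    constructor
    · rw [hstep]
      exact place_inv a _ m inv hmem
        (fun x hx => fun hax =>
          absurd (hd x m (by have := hmem x hx; omega) (by omega) hax)
            (by have := hmem x hx; omega))
    · rw [hstep]
      refine ((flatten_place a _ m).trans (perm.cons m)).trans ?_
      rw [List.range_succ]
      exact (List.perm_append_singleton m (List.range m)).symm


variable {a : ℕ → ℕ} {P : List (List ℕ)}

theorem pile_eq (hnd : P.flatten.Nodup) {q q' : Fin P.length} {x : ℕ}
    (hx : x ∈ P.get q) (hx' : x ∈ P.get q') : q = q' := by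
  by_contra hne
  have hpd := (List.nodup_flatten.mp hnd).2
  rw [List.pairwise_iff_get] at hpd
  rcases lt_or_gt_of_ne hne with h | h
  · exact hpd q q' h hx hx'
  · exact hpd q' q h hx' hx

theorem same_pile_incomp {p : List ℕ}
    (hpw : p.Pairwise (fun x y => y < x ∧ a x < a y)) {x y : ℕ}
    (hx : x ∈ p) (hy : y ∈ p) (hxy : x < y) (haxy : a x < a y) : False := by
  obtain ⟨i, rfl⟩ := List.mem_iff_get.mp hx
  obtain ⟨j, rfl⟩ := List.mem_iff_get.mp hy
  rw [List.pairwise_iff_get] at hpw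
  rcases lt_trichotomy i j with h | h | h
  · have := hpw i j h; omega
  · rw [h] at hxy; omega
  · have := hpw j i h; omega

theorem descend (hch : List.IsChain (Rel a) P) :
    ∀ (d q : ℕ) (h : q + d < P.length) (y : ℕ), y ∈ P.get ⟨q + d, h⟩ →
      ∃ x ∈ P.get ⟨q, by omega⟩, x ≤ y ∧ a x ≤ a y := by
  intro d
  induction d with
  | zero => intro q h y hy; exact ⟨y, hy, le_refl _, le_refl _⟩
  | succ d ih =>
    intro q h y hy
    have hrel : Rel a (P.get ⟨q + d, by omega⟩) (P.get ⟨q + d + 1, by omega⟩) := by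
      have := List.isChain_iff_getElem.mp hch (q + d) (by omega)
      exact this
    obtain ⟨x', hx', h1, h2⟩ := hrel y hy
    obtain ⟨x, hx, h3, h4⟩ := ih q (by omega) x' hx'
    exact ⟨x, hx, by omega, by omega⟩

theorem pile_lt (inv : Inv a P) (hnd : P.flatten.Nodup) {q q' : Fin P.length} {x y : ℕ}
    (hx : x ∈ P.get q) (hy : y ∈ P.get q') (h1 : x < y) (h2 : a x < a y) :
    (q : ℕ) < (q' : ℕ) := by
  by_contra hle
  rcases eq_or_lt_of_le (Nat.le_of_not_lt hle) with heq | hlt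
  · -- same pile
    have hqq : q = q' := Fin.ext heq.symm
    rw [← hqq] at hy
    exact same_pile_incomp (inv.2.1 _ (List.get_mem P q)) hx hy h1 h2
  · -- q' < q : descend from x in pile q down to pile q'
    have hq : (q' : ℕ) + ((q : ℕ) - (q' : ℕ)) < P.length := by
      have := q.isLt; omega
    have hqeq : (⟨(q' : ℕ) + ((q : ℕ) - (q' : ℕ)), hq⟩ : Fin P.length) = q :=
      Fin.ext (by simp; omega)
    obtain ⟨z, hz, h3, h4⟩ := descend inv.2.2 ((q : ℕ) - (q' : ℕ)) (q' : ℕ) hq x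
      (by rw [hqeq]; exact hx)
    have hz' : z ∈ P.get q' := by
      have h5 : (⟨(q' : ℕ), by omega⟩ : Fin P.length) = q' := Fin.ext rfl
      rw [← h5]; exact hz
    exact same_pile_incomp (inv.2.1 _ (List.get_mem P q')) hz' hy (by omega) (by omega)

theorem below_facts (inv : Inv a P) (hb : Below P u v) :
    u < v ∧ a v < a u ∧ ∃ q : Fin P.length, u ∈ P.get q ∧ v ∈ P.get q := by
  obtain ⟨p, hp, k, l, hkl, hk, hl⟩ := hb
  obtain ⟨hk', hkv0⟩ := List.getElem?_eq_some_iff.mp hk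
  obtain ⟨hl', hlu0⟩ := List.getElem?_eq_some_iff.mp hl
  have hkv : p.get ⟨k, hk'⟩ = v := by simpa using hkv0
  have hlu : p.get ⟨l, hl'⟩ = u := by simpa using hlu0
  have hpw := inv.2.1 p hp
  rw [List.pairwise_iff_get] at hpw
  have hrel := hpw ⟨k, hk'⟩ ⟨l, hl'⟩ hkl
  rw [hkv, hlu] at hrel
  obtain ⟨q, hq⟩ := List.mem_iff_get.mp hp
  refine ⟨hrel.1, hrel.2, q, ?_, ?_⟩
  · rw [hq]; exact hlu ▸ List.get_mem p ⟨l, hl'⟩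
  · rw [hq]; exact hkv ▸ List.get_mem p ⟨k, hk'⟩


theorem sdiff_eqs {J1 J : Finset ℕ} {u v : ℕ} (h1 : J1 \ J = {u}) (h2 : J \ J1 = {v}) :
    u ∈ J1 ∧ u ∉ J ∧ v ∈ J ∧ v ∉ J1 ∧ u ≠ v ∧ J1 = insert u (J.erase v) := by
  have hu : u ∈ J1 \ J := h1 ▸ Finset.mem_singleton_self u
  have hv : v ∈ J \ J1 := h2 ▸ Finset.mem_singleton_self v
  rw [Finset.mem_sdiff] at hu hv
  refine ⟨hu.1, hu.2, hv.1, hv.2, fun h => hu.2 (h ▸ hv.1), ?_⟩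
  ext x
  simp only [Finset.mem_insert, Finset.mem_erase]
  constructor
  · intro hx
    by_cases hxJ : x ∈ J
    · exact Or.inr ⟨fun h => hv.2 (h ▸ hx), hxJ⟩
    · left
      have hx' : x ∈ J1 \ J := Finset.mem_sdiff.mpr ⟨hx, hxJ⟩
      rw [h1] at hx'
      exact Finset.mem_singleton.mp hx'
  · rintro (rfl | ⟨hxv, hxJ⟩)
    · exact hu.1
    · by_contra hx
      have hx' : x ∈ J \ J1 := Finset.mem_sdiff.mpr ⟨hxJ, hx⟩
      rw [h2] at hx'
      exact hxv (Finset.mem_singleton.mp hx')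

theorem insert_sdiff_same {J : Finset ℕ} {u1 u2 v : ℕ} (hu1 : u1 ∉ J) (hu2 : u2 ∉ J)
    (h12 : u1 ≠ u2) (hv : v ∈ J) :
    insert u1 (J.erase v) \ insert u2 (J.erase v) = {u1} := by
  ext x
  simp only [Finset.mem_sdiff, Finset.mem_insert, Finset.mem_erase, Finset.mem_singleton]
  constructor
  · rintro ⟨rfl | ⟨hxv, hxJ⟩, hr⟩
    · rfl
    · exact absurd (Or.inr ⟨hxv, hxJ⟩) hr
  · rintro rfl
    exact ⟨Or.inl rfl, by rintro (rfl | ⟨h, hJ⟩) <;> [exact h12 rfl; exact hu1 hJ]⟩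

theorem K_sdiff_J1 {J : Finset ℕ} {u1 u2 v1 v2 : ℕ} (hu1 : u1 ∉ J) (hu2 : u2 ∉ J)
    (h12 : u1 ≠ u2) (hv1 : v1 ∈ J) (hv2 : v2 ∈ J) (hv12 : v1 ≠ v2) :
    insert u1 (insert u2 ((J.erase v1).erase v2)) \ insert u1 (J.erase v1) = {u2} := by
  ext x
  simp only [Finset.mem_sdiff, Finset.mem_insert, Finset.mem_erase, Finset.mem_singleton]
  constructor
  · rintro ⟨rfl | rfl | ⟨hxv2, hxv1, hxJ⟩, hr⟩
    · exact absurd (Or.inl rfl) hr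
    · rfl
    · exact absurd (Or.inr ⟨hxv1, hxJ⟩) hr
  · rintro rfl
    refine ⟨Or.inr (Or.inl rfl), ?_⟩
    rintro (rfl | ⟨h, hJ⟩)
    · exact h12 rfl
    · exact hu2 hJ

theorem J1_sdiff_K {J : Finset ℕ} {u1 u2 v1 v2 : ℕ} (hu1 : u1 ∉ J) (hu2 : u2 ∉ J)
    (hv1 : v1 ∈ J) (hv2 : v2 ∈ J) (hv12 : v1 ≠ v2) :
    insert u1 (J.erase v1) \ insert u1 (insert u2 ((J.erase v1).erase v2)) = {v2} := by
  ext x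
  simp only [Finset.mem_sdiff, Finset.mem_insert, Finset.mem_erase, Finset.mem_singleton]
  constructor
  · rintro ⟨rfl | ⟨hxv1, hxJ⟩, hr⟩
    · exact absurd (Or.inl rfl) hr
    · by_contra hx
      exact hr (Or.inr (Or.inr ⟨hx, hxv1, hxJ⟩))
  · rintro rfl
    refine ⟨Or.inr ⟨fun h => hv12 h.symm, hv2⟩, ?_⟩
    rintro (rfl | rfl | ⟨h, -, -⟩)
    · exact hu1 hv2
    · exact hu2 hv2
    · exact h rfl


theorem pile_unique {P : List (List ℕ)} (hnd : P.flatten.Nodup) {p p' : List ℕ}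
    (hp : p ∈ P) (hp' : p' ∈ P) {x : ℕ} (hx : x ∈ p) (hx' : x ∈ p') : p = p' := by
  obtain ⟨q, rfl⟩ := List.mem_iff_get.mp hp
  obtain ⟨q', rfl⟩ := List.mem_iff_get.mp hp'
  rw [pile_eq hnd hx hx']

theorem diamond {a : ℕ → ℕ} {n : ℕ}
    (inv : Inv a (pilesOf a (List.range (n+1))))
    (hnd : (pilesOf a (List.range (n+1))).flatten.Nodup)
    (hflat : ∀ x, x ∈ (pilesOf a (List.range (n+1))).flatten ↔ x < n+1)
    {J J1 J2 : Finset ℕ} (h1 : StepLT a n J1 J) (h2 : StepLT a n J2 J) :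
    J1 = J2 ∨ StepLT a n J1 J2 ∨ StepLT a n J2 J1 ∨
      ∃ K, StepLT a n K J1 ∧ StepLT a n K J2 := by
  set P := pilesOf a (List.range (n+1)) with hPdef
  obtain ⟨hJ1max, hJmax, u1, v1, e11, e12, hb1⟩ := h1
  obtain ⟨hJ2max, -, u2, v2, e21, e22, hb2⟩ := h2
  obtain ⟨hu1J1, hu1J, hv1J, hv1J1, hu1v1, hJ1eq⟩ := sdiff_eqs e11 e12
  obtain ⟨hu2J2, hu2J, hv2J, hv2J2, hu2v2, hJ2eq⟩ := sdiff_eqs e21 e22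
  obtain ⟨hu1lt, hav1, q1, hu1q1, hv1q1⟩ := below_facts inv hb1
  obtain ⟨hu2lt, hav2, q2, hu2q2, hv2q2⟩ := below_facts inv hb2
  have hfJ : Feasible a J := hJmax.2.1
  have hfJ1 : Feasible a J1 := hJ1max.2.1
  have hfJ2 : Feasible a J2 := hJ2max.2.1
  by_cases hv : v1 = v2
  · subst hv
    by_cases hu : u1 = u2
    · left; rw [hJ1eq, hJ2eq, hu]
    · obtain ⟨p, hp, k1, l1, hkl1, hk1, hl1⟩ := hb1
      obtain ⟨p', hp', k2, l2, hkl2, hk2, hl2⟩ := hb2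
      have hv1p : v1 ∈ p := by
        obtain ⟨h, hh⟩ := List.getElem?_eq_some_iff.mp hk1; exact hh ▸ List.getElem_mem h
      have hv1p' : v1 ∈ p' := by
        obtain ⟨h, hh⟩ := List.getElem?_eq_some_iff.mp hk2; exact hh ▸ List.getElem_mem h
      have hpp : p = p' := pile_unique hnd hp hp' hv1p hv1p'
      subst hpp
      have hll : l1 ≠ l2 := by
        intro h
        rw [h, hl2] at hl1
        exact hu (Option.some.inj hl1).symm
      rcases lt_or_gt_of_ne hll with h | h
      · -- u2 is below u1 : J2 ⊲ J1
        right; right; left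
        refine ⟨hJ2max, hJ1max, u2, u1, ?_, ?_, ⟨p, hp, l1, l2, h, hl1, hl2⟩⟩
        · rw [hJ2eq, hJ1eq]; exact insert_sdiff_same hu2J hu1J (Ne.symm hu) hv1J
        · rw [hJ2eq, hJ1eq]; exact insert_sdiff_same hu1J hu2J hu hv1J
      · -- u1 is below u2 : J1 ⊲ J2
        right; left
        refine ⟨hJ1max, hJ2max, u1, u2, ?_, ?_, ⟨p, hp, l2, l1, h, hl2, hl1⟩⟩
        · rw [hJ2eq, hJ1eq]; exact insert_sdiff_same hu1J hu2J hu hv1J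
        · rw [hJ2eq, hJ1eq]; exact insert_sdiff_same hu2J hu1J (Ne.symm hu) hv1J
  · by_cases hu : u1 = u2
    · exfalso
      subst hu
      have hq : q1 = q2 := pile_eq hnd hu1q1 hu2q2
      rw [← hq] at hv2q2
      rcases lt_trichotomy v1 v2 with h | h | h
      · exact same_pile_incomp (inv.2.1 _ (List.get_mem P q1)) hv1q1 hv2q2 h
          (hfJ v1 hv1J v2 hv2J h)
      · exact hv h
      · exact same_pile_incomp (inv.2.1 _ (List.get_mem P q1)) hv2q2 hv1q1 h
          (hfJ v2 hv2J v1 hv1J h)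
    · -- main case: both coordinates can be pushed simultaneously
      right; right; right
      have hu1v2 : u1 ≠ v2 := fun h => hu1J (h ▸ hv2J)
      have hu2v1 : u2 ≠ v1 := fun h => hu2J (h ▸ hv1J)
      have hv1J2 : v1 ∈ J2 := by
        rw [hJ2eq]; exact Finset.mem_insert_of_mem (Finset.mem_erase.mpr ⟨hv, hv1J⟩)
      have hv2J1 : v2 ∈ J1 := by
        rw [hJ1eq]
        exact Finset.mem_insert_of_mem (Finset.mem_erase.mpr ⟨fun h => hv h.symm, hv2J⟩)
      have hpair : (u1 < u2 → a u1 < a u2) ∧ (u2 < u1 → a u2 < a u1) := by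
        have hne1 : v1 ≠ u2 := fun h => hu2J (h ▸ hv1J)
        rcases lt_or_gt_of_ne hne1 with hA | hA
        · have ha1 : a v1 < a u2 := hfJ2 v1 hv1J2 u2 hu2J2 hA
          rcases lt_or_gt_of_ne hu1v2 with hB | hB
          · have ha2 : a u1 < a v2 := hfJ1 u1 hu1J1 v2 hv2J1 hB
            constructor <;> intro <;> omega
          · have ha2 : a v2 < a u1 := hfJ1 v2 hv2J1 u1 hu1J1 hB
            have c1 : (q1:ℕ) < q2 := pile_lt inv hnd hv1q1 hu2q2 hA ha1
            have c2 : (q2:ℕ) < q1 := pile_lt inv hnd hv2q2 hu1q1 hB ha2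
            omega
        · have ha1 : a u2 < a v1 := hfJ2 u2 hu2J2 v1 hv1J2 hA
          rcases lt_or_gt_of_ne hu1v2 with hB | hB
          · have ha2 : a u1 < a v2 := hfJ1 u1 hu1J1 v2 hv2J1 hB
            have c1 : (q2:ℕ) < q1 := pile_lt inv hnd hu2q2 hv1q1 hA ha1
            have c2 : (q1:ℕ) < q2 := pile_lt inv hnd hu1q1 hv2q2 hB ha2
            omega
          · have ha2 : a v2 < a u1 := hfJ1 v2 hv2J1 u1 hu1J1 hB
            constructor <;> intro <;> omega
      have hKmem : ∀ x, x ∈ insert u1 (insert u2 ((J.erase v1).erase v2)) ↔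
          x = u1 ∨ x = u2 ∨ (x ≠ v2 ∧ x ≠ v1 ∧ x ∈ J) := by
        intro x; simp [Finset.mem_insert, Finset.mem_erase]
      have hu1r : u1 < n + 1 := by
        rw [← hflat]
        exact List.mem_flatten.mpr ⟨P.get q1, List.get_mem P q1, hu1q1⟩
      have hu2r : u2 < n + 1 := by
        rw [← hflat]
        exact List.mem_flatten.mpr ⟨P.get q2, List.get_mem P q2, hu2q2⟩
      have hmemJ1 : ∀ x, x ∈ J → x ≠ v1 → x ∈ J1 := fun x hx hxv => by
        rw [hJ1eq]; exact Finset.mem_insert_of_mem (Finset.mem_erase.mpr ⟨hxv, hx⟩)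
      have hmemJ2 : ∀ x, x ∈ J → x ≠ v2 → x ∈ J2 := fun x hx hxv => by
        rw [hJ2eq]; exact Finset.mem_insert_of_mem (Finset.mem_erase.mpr ⟨hxv, hx⟩)
      have hKfeas : Feasible a (insert u1 (insert u2 ((J.erase v1).erase v2))) := by
        intro i hi j hj hij
        rw [hKmem] at hi hj
        rcases hi with rfl | rfl | ⟨hiv2, hiv1, hiJ⟩ <;>
          rcases hj with rfl | rfl | ⟨hjv2, hjv1, hjJ⟩
        · omega
        · exact hpair.1 hij
        · exact hfJ1 _ hu1J1 _ (hmemJ1 _ hjJ hjv1) hij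
        · exact hpair.2 hij
        · omega
        · exact hfJ2 _ hu2J2 _ (hmemJ2 _ hjJ hjv2) hij
        · exact hfJ1 _ (hmemJ1 _ hiJ hiv1) _ hu1J1 hij
        · exact hfJ2 _ (hmemJ2 _ hiJ hiv2) _ hu2J2 hij
        · exact hfJ _ hiJ _ hjJ hij
      have hKsub : insert u1 (insert u2 ((J.erase v1).erase v2)) ⊆ Finset.range (n+1) := by
        intro x hx
        rw [hKmem] at hx
        rcases hx with rfl | rfl | ⟨-, -, hxJ⟩
        · exact Finset.mem_range.mpr hu1r
        · exact Finset.mem_range.mpr hu2r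
        · exact hJmax.1 hxJ
      have hcard : (insert u1 (insert u2 ((J.erase v1).erase v2))).card = J.card := by
        have h2J : v2 ∈ J.erase v1 := Finset.mem_erase.mpr ⟨fun h => hv h.symm, hv2J⟩
        have hcJ : 2 ≤ J.card := by
          have hsub : ({v1, v2} : Finset ℕ) ⊆ J := by
            intro x hx
            rcases Finset.mem_insert.mp hx with rfl | hx
            · exact hv1J
            · exact (Finset.mem_singleton.mp hx) ▸ hv2J
          have hc := Finset.card_le_card hsub
          rwa [Finset.card_insert_of_notMem (by simpa using hv),
            Finset.card_singleton] at hc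
        have e1 : ((J.erase v1).erase v2).card = J.card - 2 := by
          rw [Finset.card_erase_of_mem h2J, Finset.card_erase_of_mem hv1J]
          omega
        have hu2m : u2 ∉ (J.erase v1).erase v2 := fun h =>
          hu2J (Finset.mem_of_mem_erase (Finset.mem_of_mem_erase h))
        have hu1m : u1 ∉ insert u2 ((J.erase v1).erase v2) := by
          rw [Finset.mem_insert]
          rintro (rfl | h)
          · exact hu rfl
          · exact hu1J (Finset.mem_of_mem_erase (Finset.mem_of_mem_erase h))
        rw [Finset.card_insert_of_notMem hu1m, Finset.card_insert_of_notMem hu2m, e1]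
        omega
      have hKmax : MaxFeasible a n (insert u1 (insert u2 ((J.erase v1).erase v2))) :=
        ⟨hKsub, hKfeas, fun J' hs hf => (hJmax.2.2 J' hs hf).trans_eq hcard.symm⟩
      have hKalt : insert u1 (insert u2 ((J.erase v1).erase v2)) =
          insert u2 (insert u1 ((J.erase v2).erase v1)) := by
        ext x
        simp only [Finset.mem_insert, Finset.mem_erase]
        constructor <;> rintro (rfl | rfl | ⟨h1, h2, h3⟩)
        · exact Or.inr (Or.inl rfl)
        · exact Or.inl rfl
        · exact Or.inr (Or.inr ⟨h2, h1, h3⟩)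
        · exact Or.inr (Or.inl rfl)
        · exact Or.inl rfl
        · exact Or.inr (Or.inr ⟨h2, h1, h3⟩)
      refine ⟨insert u1 (insert u2 ((J.erase v1).erase v2)),
        ⟨hKmax, hJ1max, u2, v2, ?_, ?_, hb2⟩, ⟨hKmax, hJ2max, u1, v1, ?_, ?_, hb1⟩⟩
      · rw [hJ1eq]; exact K_sdiff_J1 hu1J hu2J hu hv1J hv2J hv
      · rw [hJ1eq]; exact J1_sdiff_K hu1J hu2J hv1J hv2J hv
      · rw [hJ2eq, hKalt]; exact K_sdiff_J1 hu2J hu1J (Ne.symm hu) hv2J hv1J (Ne.symm hv)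
      · rw [hJ2eq, hKalt]; exact J1_sdiff_K hu2J hu1J hv2J hv1J (Ne.symm hv)


theorem step_sum {a : ℕ → ℕ} {n : ℕ} (inv : Inv a (pilesOf a (List.range (n+1))))
    {J' J : Finset ℕ} (h : StepLT a n J' J) :
    ∑ x ∈ J, a x < ∑ x ∈ J', a x := by
  obtain ⟨hJ'max, hJmax, u, v, e1, e2, hb⟩ := h
  obtain ⟨huJ', huJ, hvJ, hvJ', huv, heq⟩ := sdiff_eqs e1 e2
  obtain ⟨hlt, hav, -⟩ := below_facts inv hb
  have h1 : ∑ x ∈ J.erase v, a x + a v = ∑ x ∈ J, a x := Finset.sum_erase_add J a hvJ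
  have h2 : ∑ x ∈ J', a x = a u + ∑ x ∈ J.erase v, a x := by
    rw [heq, Finset.sum_insert (fun h => huJ (Finset.mem_of_mem_erase h))]
  omega

theorem sum_bound {a : ℕ → ℕ} {n : ℕ} (hA : ∀ i, i ≤ n → a i ≤ n) {J : Finset ℕ}
    (hs : J ⊆ Finset.range (n+1)) : ∑ x ∈ J, a x ≤ (n+1) * n := by
  calc ∑ x ∈ J, a x ≤ ∑ _x ∈ J, n :=
        Finset.sum_le_sum (fun i hi => hA i (by
          have := Finset.mem_range.mp (hs hi); omega))
    _ = J.card * n := by rw [Finset.sum_const, smul_eq_mul]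
    _ ≤ (n+1) * n := Nat.mul_le_mul_right n (by
        have := Finset.card_le_card hs
        simpa using this)

theorem exists_min {a : ℕ → ℕ} {n : ℕ} (inv : Inv a (pilesOf a (List.range (n+1))))
    (hA : ∀ i, i ≤ n → a i ≤ n) :
    ∀ (k : ℕ) (J : Finset ℕ), MaxFeasible a n J →
      (n+1) * n + 1 - ∑ x ∈ J, a x ≤ k →
      ∃ K, Relation.ReflTransGen (StepLT a n) K J ∧ MaxFeasible a n K ∧ MinimalLT a n K := by
  intro k
  induction k with
  | zero =>
    intro J hJ hk
    exact absurd hk (by have := sum_bound hA hJ.1; omega)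
  | succ k ih =>
    intro J hJ hk
    by_cases hmin : MinimalLT a n J
    · exact ⟨J, Relation.ReflTransGen.refl, hJ, hmin⟩
    · unfold MinimalLT at hmin
      push_neg at hmin
      obtain ⟨J', hJ'max, hpile⟩ := hmin
      have hstep : StepLT a n J' J := ⟨hJ'max, hJ, hpile⟩
      have hsum := step_sum inv hstep
      have hb' := sum_bound hA hJ'max.1
      obtain ⟨K, hK1, hK2, hK3⟩ := ih J' hJ'max (by omega)
      exact ⟨K, hK1.tail hstep, hK2, hK3⟩

end Stmt8

/-- For every maximum feasible set `I`, the lower set `M(I)` of `I` in the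
transitive closure of `⊲` contains exactly one `⊲`-minimal set. -/
theorem stmt8 (n : ℕ) (a : ℕ → ℕ) (hn : 0 < n) (h0 : a 0 = 0)
    (hmem : ∀ i ∈ Finset.Icc 1 n, a i ∈ Finset.Icc 1 n)
    (hinj : ∀ i ∈ Finset.Icc 1 n, ∀ j ∈ Finset.Icc 1 n, a i = a j → i = j)
    (I : Finset ℕ) (hI : MaxFeasible a n I) :
    ∃! K : Finset ℕ, MaxFeasible a n K ∧ InLowerSet a n K I ∧
      MinimalLT a n K := by
  have hA : ∀ i, i ≤ n → a i ≤ n := by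
    intro i hi
    rcases Nat.eq_zero_or_pos i with rfl | hpos
    · omega
    · have := hmem i (Finset.mem_Icc.mpr ⟨hpos, hi⟩)
      exact (Finset.mem_Icc.mp this).2
  have hpos : ∀ i, 1 ≤ i → i ≤ n → 1 ≤ a i := by
    intro i h1 h2
    exact (Finset.mem_Icc.mp (hmem i (Finset.mem_Icc.mpr ⟨h1, h2⟩))).1
  have hinj' : ∀ i j, i ≤ n → j ≤ n → a i = a j → i = j := by
    intro i j hi hj hij
    rcases Nat.eq_zero_or_pos i with rfl | hposi <;> rcases Nat.eq_zero_or_pos j with rfl | hposj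
    · rfl
    · exact absurd hij.symm (by have := hpos j hposj hj; omega)
    · exact absurd hij (by have := hpos i hposi hi; omega)
    · exact hinj i (Finset.mem_Icc.mpr ⟨hposi, hi⟩) j (Finset.mem_Icc.mpr ⟨hposj, hj⟩) hij
  obtain ⟨inv, perm⟩ := Stmt8.pilesOf_inv a (n+1)
    (fun i j hi hj => hinj' i j (by omega) (by omega))
  have hnd : (pilesOf a (List.range (n+1))).flatten.Nodup :=
    (perm.nodup_iff).mpr List.nodup_range
  have hflat : ∀ x, x ∈ (pilesOf a (List.range (n+1))).flatten ↔ x < n+1 :=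
    fun x => perm.mem_iff.trans List.mem_range
  obtain ⟨K, hK1, hK2, hK3⟩ := Stmt8.exists_min inv hA ((n+1)*n + 1) I hI (by omega)
  refine ⟨K, ⟨hK2, hK1, hK3⟩, ?_⟩
  rintro K' ⟨hK'max, hK'low, hK'min⟩
  -- confluence
  have hcr : ∀ A B C, Function.swap (StepLT a n) A B → Function.swap (StepLT a n) A C →
      ∃ d, Relation.ReflGen (Function.swap (StepLT a n)) B d ∧
        Relation.ReflTransGen (Function.swap (StepLT a n)) C d := by
    intro A B C hAB hAC
    rcases Stmt8.diamond inv hnd hflat hAB hAC with rfl | h | h | ⟨K0, h1, h2⟩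
    · exact ⟨B, Relation.ReflGen.refl, Relation.ReflTransGen.refl⟩
    · exact ⟨B, Relation.ReflGen.refl, Relation.ReflTransGen.single h⟩
    · exact ⟨C, Relation.ReflGen.single h, Relation.ReflTransGen.refl⟩
    · exact ⟨K0, Relation.ReflGen.single h1, Relation.ReflTransGen.single h2⟩
  have hswapK : Relation.ReflTransGen (Function.swap (StepLT a n)) I K :=
    Relation.reflTransGen_swap.mpr hK1
  have hswapK' : Relation.ReflTransGen (Function.swap (StepLT a n)) I K' :=
    Relation.reflTransGen_swap.mpr hK'low
  obtain ⟨D, hD1, hD2⟩ := Relation.church_rosser hcr hswapK hswapK'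
  have hstop : ∀ X D', MinimalLT a n X →
      Relation.ReflTransGen (Function.swap (StepLT a n)) X D' → D' = X := by
    intro X D' hmin h
    rcases h.cases_head with rfl | ⟨c, hc, -⟩
    · rfl
    · exact absurd hc.2.2 (hmin c hc.1)
  have e1 : D = K := hstop K D hK3 hD1
  have e2 : D = K' := hstop K' D hK'min hD2
  rw [← e2, e1]
end

section
/- Let 𝓘 be the family of maximum feasible sets of A (extended with a_0 = 0), let ⊲ be the relation on 𝓘 induced by the patience sorting piles, and for I ∈ 𝓘 let M(I) be the lower set of I in the transitive closure of ⊲. If I, J ∈ 𝓘 satisfy I ⊲ J, then the unique ⊲-minimal set of M(I) equals the unique ⊲-minimal set of M(J). -/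
section AuxStmt9
set_option linter.deprecated false

namespace Stmt9

/-- within-pile relation: deeper elements have smaller index and larger value -/
def PR (a : ℕ → ℕ) (x y : ℕ) : Prop := y < x ∧ a x < a y

lemma place_inv (a : ℕ → ℕ) (i : ℕ) : ∀ (piles : List (List ℕ)),
    (∀ p ∈ piles, p ≠ []) →
    (∀ p ∈ piles, p.Pairwise (PR a)) →
    (∀ x ∈ piles.flatten, x < i) →
    piles.flatten.Nodup →
    (∀ p ∈ place a piles i, p ≠ []) ∧
    (∀ p ∈ place a piles i, p.Pairwise (PR a)) ∧
    (∀ x ∈ (place a piles i).flatten, x = i ∨ x ∈ piles.flatten) ∧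
    (place a piles i).flatten.Nodup := by
  intro piles
  induction piles with
  | nil =>
    intro _ _ _ _
    simp [place, PR]
  | cons p ps ih =>
    intro hne hpw hb hnd
    have hpne : p ≠ [] := hne p (by simp)
    simp only [place]
    by_cases hif : a i < a p.headI
    · rw [if_pos hif]
      obtain ⟨h, t, rfl⟩ : ∃ h t, p = h :: t := by
        cases p with
        | nil => exact absurd rfl hpne
        | cons h t => exact ⟨h, t, rfl⟩
      have hpwp := hpw _ (by simp : (h :: t) ∈ _)
      rw [List.pairwise_cons] at hpwp
      have hrel : ∀ y ∈ h :: t, PR a i y := by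
        intro y hy
        refine ⟨hb y (List.mem_flatten.mpr ⟨h :: t, by simp, hy⟩), ?_⟩
        rcases List.mem_cons.mp hy with rfl | hy
        · exact hif
        · exact lt_trans hif ((hpwp.1 y hy).2)
      refine ⟨?_, ?_, ?_, ?_⟩
      · intro q hq
        rcases List.mem_cons.mp hq with rfl | hq
        · simp
        · exact hne q (by simp [hq])
      · intro q hq
        rcases List.mem_cons.mp hq with rfl | hq
        · exact List.pairwise_cons.mpr ⟨hrel, List.pairwise_cons.mpr hpwp⟩
        · exact hpw q (by simp [hq])
      · intro x hx
        rcases List.mem_flatten.mp hx with ⟨q, hq, hxq⟩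
        rcases List.mem_cons.mp hq with rfl | hq
        · rcases List.mem_cons.mp hxq with rfl | hxq
          · exact Or.inl rfl
          · exact Or.inr (List.mem_flatten.mpr ⟨h :: t, by simp, hxq⟩)
        · exact Or.inr (List.mem_flatten.mpr ⟨q, by simp [hq], hxq⟩)
      · simp only [List.flatten_cons, List.cons_append]
        refine List.Nodup.cons ?_ (by simpa [List.flatten_cons] using hnd)
        intro hmem
        exact lt_irrefl i (hb i (by simpa [List.flatten_cons] using hmem))
    · rw [if_neg hif]
      have hnd' : (p ++ ps.flatten).Nodup := by simpa [List.flatten_cons] using hnd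
      rw [List.nodup_append] at hnd'
      obtain ⟨hndp, hndps, hdisj⟩ := hnd'
      obtain ⟨ihne, ihpw, ihmem, ihnd⟩ := ih
        (fun q hq => hne q (by simp [hq]))
        (fun q hq => hpw q (by simp [hq]))
        (fun x hx => hb x (by
          simp only [List.flatten_cons, List.mem_append]; exact Or.inr hx))
        hndps
      refine ⟨?_, ?_, ?_, ?_⟩
      · intro q hq
        rcases List.mem_cons.mp hq with rfl | hq
        · exact hpne
        · exact ihne q hq
      · intro q hq
        rcases List.mem_cons.mp hq with rfl | hq
        · exact hpw q (by simp)
        · exact ihpw q hq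
      · intro x hx
        simp only [List.flatten_cons, List.mem_append] at hx ⊢
        rcases hx with hx | hx
        · exact Or.inr (Or.inl hx)
        · rcases ihmem x hx with rfl | hx
          · exact Or.inl rfl
          · exact Or.inr (Or.inr hx)
      · simp only [List.flatten_cons]
        rw [List.nodup_append]
        refine ⟨hndp, ihnd, ?_⟩
        intro x hxp y hx hxy
        subst hxy
        rcases ihmem x hx with rfl | hx
        · exact lt_irrefl x (hb x (by
            simp only [List.flatten_cons, List.mem_append]; exact Or.inl hxp))
        · exact hdisj x hxp x hx rfl

lemma foldl_inv (a : ℕ → ℕ) : ∀ (l : List ℕ) (piles : List (List ℕ)),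
    l.Pairwise (· < ·) →
    (∀ x ∈ piles.flatten, ∀ i ∈ l, x < i) →
    (∀ p ∈ piles, p ≠ []) →
    (∀ p ∈ piles, p.Pairwise (PR a)) →
    piles.flatten.Nodup →
    (∀ p ∈ l.foldl (place a) piles, p.Pairwise (PR a)) ∧
    (∀ x ∈ (l.foldl (place a) piles).flatten, x ∈ piles.flatten ∨ x ∈ l) ∧
    (l.foldl (place a) piles).flatten.Nodup := by
  intro l
  induction l with
  | nil =>
    intro piles _ _ _ hpw hnd
    exact ⟨hpw, fun x hx => Or.inl hx, hnd⟩
  | cons i l ih =>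
    intro piles hsort hb hne hpw hnd
    rw [List.pairwise_cons] at hsort
    obtain ⟨pne, ppw, pmem, pnd⟩ := place_inv a i piles hne hpw
      (fun x hx => hb x hx i (by simp)) hnd
    simp only [List.foldl_cons]
    obtain ⟨rpw, rmem, rnd⟩ := ih (place a piles i) hsort.2
      (by
        intro x hx j hj
        rcases pmem x hx with rfl | hx
        · exact hsort.1 j hj
        · exact hb x hx j (by simp [hj]))
      pne ppw pnd
    refine ⟨rpw, ?_, rnd⟩
    intro x hx
    rcases rmem x hx with hx | hx
    · rcases pmem x hx with rfl | hx
      · exact Or.inr (by simp)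
      · exact Or.inl hx
    · exact Or.inr (by simp [hx])

lemma piles_pairwise (a : ℕ → ℕ) (n : ℕ) :
    ∀ p ∈ pilesOf a (List.range (n+1)), p.Pairwise (PR a) :=
  (foldl_inv a (List.range (n+1)) [] List.pairwise_lt_range
    (by simp) (by simp) (by simp) (by simp)).1

lemma piles_nodup (a : ℕ → ℕ) (n : ℕ) : (pilesOf a (List.range (n+1))).flatten.Nodup :=
  (foldl_inv a (List.range (n+1)) [] List.pairwise_lt_range
    (by simp) (by simp) (by simp) (by simp)).2.2

lemma piles_mem (a : ℕ → ℕ) (n : ℕ) :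
    ∀ x ∈ (pilesOf a (List.range (n+1))).flatten, x < n + 1 := by
  intro x hx
  rcases (foldl_inv a (List.range (n+1)) [] List.pairwise_lt_range
    (by simp) (by simp) (by simp) (by simp)).2.1 x hx with h | h
  · simp at h
  · simpa using h

lemma pairwise_get? {R : ℕ → ℕ → Prop} {l : List ℕ} (h : l.Pairwise R) {k k' : ℕ} {x y : ℕ}
    (hkk : k < k') (hx : l[k]? = some x) (hy : l[k']? = some y) : R x y := by
  rw [List.getElem?_eq_some_iff] at hx hy
  obtain ⟨hk, rfl⟩ := hx
  obtain ⟨hk', rfl⟩ := hy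
  exact List.pairwise_iff_getElem.mp h k k' hk hk' hkk

lemma get?_mem' {l : List ℕ} {k x : ℕ} (h : l[k]? = some x) : x ∈ l := by
  rw [List.getElem?_eq_some_iff] at h
  obtain ⟨hk, rfl⟩ := h
  exact List.getElem_mem hk

lemma mem_unique_pile : ∀ (piles : List (List ℕ)), piles.flatten.Nodup →
    ∀ p q : List ℕ, p ∈ piles → q ∈ piles → ∀ v, v ∈ p → v ∈ q → p = q := by
  intro piles
  induction piles with
  | nil => intro _ p q hp; simp at hp
  | cons r rs ih =>
    intro hnd p q hp hq v hvp hvq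
    rw [show (r :: rs).flatten = r ++ rs.flatten from List.flatten_cons .., List.nodup_append] at hnd
    obtain ⟨_, hnd2, hdisj⟩ := hnd
    rcases List.mem_cons.mp hp with hpr | hp' <;> rcases List.mem_cons.mp hq with hqr | hq'
    · rw [hpr, hqr]
    · exact absurd (List.mem_flatten.mpr ⟨q, hq', hvq⟩ : v ∈ rs.flatten)
        (fun h => hdisj v (hpr ▸ hvp) v h rfl)
    · exact absurd (List.mem_flatten.mpr ⟨p, hp', hvp⟩ : v ∈ rs.flatten)
        (fun h => hdisj v (hqr ▸ hvq) v h rfl)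
    · exact ih hnd2 p q hp' hq' v hvp hvq

lemma below_facts {a : ℕ → ℕ} {piles : List (List ℕ)}
    (hpw : ∀ p ∈ piles, p.Pairwise (PR a)) {u v : ℕ} (h : Below piles u v) :
    u < v ∧ a v < a u ∧ u ∈ piles.flatten ∧ v ∈ piles.flatten := by
  obtain ⟨p, hp, k, l, hkl, hk, hl⟩ := h
  have := pairwise_get? (hpw p hp) hkl hk hl
  exact ⟨this.1, this.2, List.mem_flatten.mpr ⟨p, hp, get?_mem' hl⟩,
    List.mem_flatten.mpr ⟨p, hp, get?_mem' hk⟩⟩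

lemma below_below {a : ℕ → ℕ} {piles : List (List ℕ)}
    (hpw : ∀ p ∈ piles, p.Pairwise (PR a))
    (hnd : piles.flatten.Nodup) {u₁ u₂ v : ℕ} (h1 : Below piles u₁ v) (h2 : Below piles u₂ v)
    (hne : u₁ ≠ u₂) : Below piles u₂ u₁ ∨ Below piles u₁ u₂ := by
  obtain ⟨p, hp, k1, l1, hkl1, hk1, hl1⟩ := h1
  obtain ⟨q, hq, k2, l2, hkl2, hk2, hl2⟩ := h2
  obtain rfl : p = q := mem_unique_pile _ hnd p q hp hq v (get?_mem' hk1) (get?_mem' hk2)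
  have hpwp := hpw p hp
  have hll : l1 ≠ l2 := by
    intro hc; rw [hc, hl2] at hl1; exact hne (Option.some_injective _ hl1).symm
  rcases Nat.lt_or_ge l1 l2 with h | h
  · exact Or.inl ⟨p, hp, l1, l2, h, hl1, hl2⟩
  · exact Or.inr ⟨p, hp, l2, l1, lt_of_le_of_ne h (Ne.symm hll), hl2, hl1⟩

lemma above_above {a : ℕ → ℕ} {piles : List (List ℕ)}
    (hpw : ∀ p ∈ piles, p.Pairwise (PR a))
    (hnd : piles.flatten.Nodup) {u v₁ v₂ : ℕ} (h1 : Below piles u v₁) (h2 : Below piles u v₂)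
    (hne : v₁ ≠ v₂) : PR a v₁ v₂ ∨ PR a v₂ v₁ := by
  obtain ⟨p, hp, k1, l1, hkl1, hk1, hl1⟩ := h1
  obtain ⟨q, hq, k2, l2, hkl2, hk2, hl2⟩ := h2
  obtain rfl : p = q := mem_unique_pile _ hnd p q hp hq u (get?_mem' hl1) (get?_mem' hl2)
  have hpwp := hpw p hp
  have hkk : k1 ≠ k2 := by
    intro hc; rw [hc, hk2] at hk1; exact hne (Option.some_injective _ hk1).symm
  rcases Nat.lt_or_ge k1 k2 with h | h
  · exact Or.inl (pairwise_get? hpwp h hk1 hk2)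
  · exact Or.inr (pairwise_get? hpwp (lt_of_le_of_ne h (Ne.symm hkk)) hk2 hk1)

lemma eq_insert_erase {X Y : Finset ℕ} {u v : ℕ} (h1 : X \ Y = {u}) (h2 : Y \ X = {v}) :
    u ∈ X ∧ u ∉ Y ∧ v ∈ Y ∧ v ∉ X ∧ X = insert u (Y.erase v) := by
  have hu : u ∈ X \ Y := h1 ▸ Finset.mem_singleton_self u
  have hv : v ∈ Y \ X := h2 ▸ Finset.mem_singleton_self v
  rw [Finset.mem_sdiff] at hu hv
  refine ⟨hu.1, hu.2, hv.1, hv.2, ?_⟩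
  ext x
  simp only [Finset.mem_insert, Finset.mem_erase]
  constructor
  · intro hx
    by_cases hxy : x ∈ Y
    · exact Or.inr ⟨fun h => hv.2 (h ▸ hx), hxy⟩
    · left
      have : x ∈ X \ Y := Finset.mem_sdiff.mpr ⟨hx, hxy⟩
      rw [h1, Finset.mem_singleton] at this; exact this
  · rintro (rfl | ⟨hxv, hxy⟩)
    · exact hu.1
    · by_contra hxX
      have : x ∈ Y \ X := Finset.mem_sdiff.mpr ⟨hxy, hxX⟩
      rw [h2, Finset.mem_singleton] at this; exact hxv this

lemma insert_erase_sdiff {Y : Finset ℕ} {u v : ℕ} (hv : v ∈ Y) (hu : u ∉ Y) :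
    insert u (Y.erase v) \ Y = {u} ∧ Y \ insert u (Y.erase v) = {v} := by
  have huv : u ≠ v := fun h => hu (h ▸ hv)
  constructor <;> ext x <;>
    simp only [Finset.mem_sdiff, Finset.mem_insert, Finset.mem_erase, Finset.mem_singleton]
  · constructor
    · rintro ⟨rfl | ⟨h1, h2⟩, h3⟩
      · rfl
      · exact absurd h2 h3
    · rintro rfl; exact ⟨Or.inl rfl, hu⟩
  · constructor
    · rintro ⟨h1, h2⟩
      push_neg at h2
      by_contra hxv
      exact (h2.2 hxv) h1
    · rintro rfl
      refine ⟨hv, ?_⟩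
      push_neg
      exact ⟨fun h => absurd h.symm huv, fun h => absurd rfl h⟩

lemma step_sum {a : ℕ → ℕ} {X Y : Finset ℕ} {u v : ℕ}
    (h1 : X \ Y = {u}) (h2 : Y \ X = {v}) (hlt : a v < a u) :
    Y.sum a < X.sum a := by
  have hx : ∑ x ∈ X \ (X ∩ Y), a x + ∑ x ∈ X ∩ Y, a x = ∑ x ∈ X, a x :=
    Finset.sum_sdiff (Finset.inter_subset_left)
  have hy : ∑ x ∈ Y \ (Y ∩ X), a x + ∑ x ∈ Y ∩ X, a x = ∑ x ∈ Y, a x :=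
    Finset.sum_sdiff (Finset.inter_subset_left)
  rw [Finset.sdiff_inter_self_left, h1, Finset.sum_singleton] at hx
  rw [Finset.sdiff_inter_self_left, h2, Finset.sum_singleton] at hy
  rw [Finset.inter_comm] at hy
  show (∑ x ∈ Y, a x) < ∑ x ∈ X, a x
  omega

lemma diamond {a : ℕ → ℕ} {n : ℕ} {X1 X2 Y : Finset ℕ}
    (hS1 : StepLT a n X1 Y) (hS2 : StepLT a n X2 Y) :
    ∃ Z, Relation.ReflTransGen (StepLT a n) Z X1 ∧
      Relation.ReflTransGen (StepLT a n) Z X2 := by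
  by_cases hne : X1 = X2
  · subst hne; exact ⟨X1, Relation.ReflTransGen.refl, Relation.ReflTransGen.refl⟩
  obtain ⟨hMF1, hMFY, u1, v1, hd11, hd12, hb1⟩ := hS1
  obtain ⟨hMF2, -, u2, v2, hd21, hd22, hb2⟩ := hS2
  obtain ⟨hu1X, hu1Y, hv1Y, hv1X, hX1⟩ := eq_insert_erase hd11 hd12
  obtain ⟨hu2X, hu2Y, hv2Y, hv2X, hX2⟩ := eq_insert_erase hd21 hd22
  have hpw := piles_pairwise a n
  have hnd := piles_nodup a n
  obtain ⟨hu1v1, hav1u1, hu1mem, hv1mem⟩ := below_facts hpw hb1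
  obtain ⟨hu2v2, hav2u2, hu2mem, hv2mem⟩ := below_facts hpw hb2
  have hYfeas : Feasible a Y := hMFY.2.1
  by_cases hv : v1 = v2
  · subst hv
    have huu : u1 ≠ u2 := by intro h; apply hne; rw [hX1, hX2, h]
    have hEX1 : X1.erase u1 = Y.erase v1 := by
      rw [hX1, Finset.erase_insert (by simp [Finset.mem_erase, hu1Y])]
    have hEX2 : X2.erase u2 = Y.erase v1 := by
      rw [hX2, Finset.erase_insert (by simp [Finset.mem_erase, hu2Y])]
    have hu2X1 : u2 ∉ X1 := by
      rw [hX1]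
      simp only [Finset.mem_insert, Finset.mem_erase]
      rintro (h | ⟨-, h⟩)
      · exact huu h.symm
      · exact hu2Y h
    have hu1X2 : u1 ∉ X2 := by
      rw [hX2]
      simp only [Finset.mem_insert, Finset.mem_erase]
      rintro (h | ⟨-, h⟩)
      · exact huu h
      · exact hu1Y h
    rcases below_below hpw hnd hb1 hb2 huu with hB | hB
    · -- u2 is below u1 : X2 ⊲ X1
      have hX2' : X2 = insert u2 (X1.erase u1) := by rw [hEX1, hX2]
      obtain ⟨hdz1, hdz2⟩ := insert_erase_sdiff hu1X hu2X1
      exact ⟨X2, Relation.ReflTransGen.single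
        ⟨hMF2, hMF1, u2, u1, by rw [hX2']; exact hdz1, by rw [hX2']; exact hdz2, hB⟩,
        Relation.ReflTransGen.refl⟩
    · -- u1 is below u2 : X1 ⊲ X2
      have hX1' : X1 = insert u1 (X2.erase u2) := by rw [hEX2, hX1]
      obtain ⟨hdz1, hdz2⟩ := insert_erase_sdiff hu2X hu1X2
      exact ⟨X1, Relation.ReflTransGen.refl,
        Relation.ReflTransGen.single
        ⟨hMF1, hMF2, u1, u2, by rw [hX1']; exact hdz1, by rw [hX1']; exact hdz2, hB⟩⟩
  · -- different removed elements
    have huu : u1 ≠ u2 := by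
      intro h
      rcases above_above hpw hnd hb1 (h ▸ hb2) hv with hPR | hPR
      · exact lt_asymm hPR.2 (hYfeas v2 hv2Y v1 hv1Y hPR.1)
      · exact lt_asymm hPR.2 (hYfeas v1 hv1Y v2 hv2Y hPR.1)
    have hu1v2 : u1 ≠ v2 := fun h => hu1Y (h ▸ hv2Y)
    have hu2v1 : u2 ≠ v1 := fun h => hu2Y (h ▸ hv1Y)
    have memX1 : ∀ x, x ∈ Y → x ≠ v1 → x ∈ X1 := by
      intro x hxY hxv
      rw [hX1]
      simp only [Finset.mem_insert, Finset.mem_erase]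
      exact Or.inr ⟨hxv, hxY⟩
    have memX2 : ∀ x, x ∈ Y → x ≠ v2 → x ∈ X2 := by
      intro x hxY hxv
      rw [hX2]
      simp only [Finset.mem_insert, Finset.mem_erase]
      exact Or.inr ⟨hxv, hxY⟩
    have hv2X1 : v2 ∈ X1 := memX1 v2 hv2Y (Ne.symm hv)
    have hv1X2 : v1 ∈ X2 := memX2 v1 hv1Y hv
    have hX1feas : Feasible a X1 := hMF1.2.1
    have hX2feas : Feasible a X2 := hMF2.2.1
    set Z : Finset ℕ := insert u1 (insert u2 ((Y.erase v1).erase v2)) with hZdef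
    have hmemZ : ∀ x, x ∈ Z → x = u1 ∨ x = u2 ∨ (x ≠ v1 ∧ x ≠ v2 ∧ x ∈ Y) := by
      intro x hx
      rw [hZdef] at hx
      simp only [Finset.mem_insert, Finset.mem_erase] at hx
      tauto
    have hZfeas : Feasible a Z := by
      intro i hi j hj hij
      rcases hmemZ i hi with rfl | rfl | hiY <;> rcases hmemZ j hj with rfl | rfl | hjY
      · exact absurd hij (lt_irrefl _)
      · exact lt_trans (hX1feas i hu1X v2 hv2X1 (lt_trans hij hu2v2)) hav2u2
      · exact hX1feas i hu1X j (memX1 j hjY.2.2 hjY.1) hij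
      · exact lt_trans (hX2feas i hu2X v1 hv1X2 (lt_trans hij hu1v1)) hav1u1
      · exact absurd hij (lt_irrefl _)
      · exact hX2feas i hu2X j (memX2 j hjY.2.2 hjY.2.1) hij
      · exact hX1feas i (memX1 i hiY.2.2 hiY.1) j hu1X hij
      · exact hX2feas i (memX2 i hiY.2.2 hiY.2.1) j hu2X hij
      · exact hYfeas i hiY.2.2 j hjY.2.2 hij
    have hv2e : v2 ∈ Y.erase v1 := Finset.mem_erase.mpr ⟨Ne.symm hv, hv2Y⟩
    have hu2e : u2 ∉ (Y.erase v1).erase v2 :=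
      fun h => hu2Y (Finset.mem_of_mem_erase (Finset.mem_of_mem_erase h))
    have hu1e : u1 ∉ insert u2 ((Y.erase v1).erase v2) := by
      simp only [Finset.mem_insert]
      rintro (h | h)
      · exact huu h
      · exact hu1Y (Finset.mem_of_mem_erase (Finset.mem_of_mem_erase h))
    have hcard : Z.card = Y.card := by
      have h2 : 2 ≤ Y.card := Finset.one_lt_card.mpr ⟨v1, hv1Y, v2, hv2Y, hv⟩
      have hc1 : v1 ∈ Y := hv1Y
      rw [hZdef, Finset.card_insert_of_notMem hu1e, Finset.card_insert_of_notMem hu2e,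
        Finset.card_erase_of_mem hv2e, Finset.card_erase_of_mem hc1]
      omega
    have hZsub : Z ⊆ Finset.range (n + 1) := by
      intro x hx
      rcases hmemZ x hx with rfl | rfl | hxY
      · exact Finset.mem_range.mpr (piles_mem a n x hu1mem)
      · exact Finset.mem_range.mpr (piles_mem a n x hu2mem)
      · exact hMFY.1 hxY.2.2
    have hMFZ : MaxFeasible a n Z :=
      ⟨hZsub, hZfeas, fun Jx hJx hfeas => le_of_le_of_eq (hMFY.2.2 Jx hJx hfeas) hcard.symm⟩
    have hZ1 : Z = insert u2 (X1.erase v2) := by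
      rw [hX1, Finset.erase_insert_of_ne hu1v2]
      exact Finset.insert_comm u1 u2 _
    have hZ2 : Z = insert u1 (X2.erase v1) := by
      rw [hX2, Finset.erase_insert_of_ne hu2v1]
      rw [show (Y.erase v2).erase v1 = (Y.erase v1).erase v2 from Finset.erase_right_comm]
    have hu2X1 : u2 ∉ X1 := by
      rw [hX1]
      simp only [Finset.mem_insert, Finset.mem_erase]
      rintro (h | ⟨-, h⟩)
      · exact huu h.symm
      · exact hu2Y h
    have hu1X2 : u1 ∉ X2 := by
      rw [hX2]
      simp only [Finset.mem_insert, Finset.mem_erase]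
      rintro (h | ⟨-, h⟩)
      · exact huu h
      · exact hu1Y h
    obtain ⟨hdz11, hdz12⟩ := insert_erase_sdiff hv2X1 hu2X1
    obtain ⟨hdz21, hdz22⟩ := insert_erase_sdiff hv1X2 hu1X2
    refine ⟨Z, Relation.ReflTransGen.single
      ⟨hMFZ, hMF1, u2, v2, by rw [hZ1]; exact hdz11, by rw [hZ1]; exact hdz12, hb2⟩,
      Relation.ReflTransGen.single
      ⟨hMFZ, hMF2, u1, v1, by rw [hZ2]; exact hdz21, by rw [hZ2]; exact hdz22, hb1⟩⟩

lemma step_measure {a : ℕ → ℕ} {n : ℕ} {X Y : Finset ℕ} (h : StepLT a n X Y) :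
    Y.sum a < X.sum a ∧ X.sum a ≤ (Finset.range (n+1)).sum a ∧
      Y.sum a ≤ (Finset.range (n+1)).sum a := by
  obtain ⟨hMFX, hMFY, u, v, h1, h2, hb⟩ := h
  obtain ⟨-, hav, -, -⟩ := below_facts (piles_pairwise a n) hb
  exact ⟨step_sum h1 h2 hav, Finset.sum_le_sum_of_subset hMFX.1,
    Finset.sum_le_sum_of_subset hMFY.1⟩

lemma confluence (a : ℕ → ℕ) (n : ℕ) : ∀ (N : ℕ) (Y X1 X2 : Finset ℕ),
    (Finset.range (n+1)).sum a - Y.sum a ≤ N →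
    Relation.ReflTransGen (StepLT a n) X1 Y → Relation.ReflTransGen (StepLT a n) X2 Y →
    ∃ Z, Relation.ReflTransGen (StepLT a n) Z X1 ∧
      Relation.ReflTransGen (StepLT a n) Z X2 := by
  intro N
  induction N with
  | zero =>
    intro Y X1 X2 hm h1 h2
    rcases Relation.ReflTransGen.cases_tail h1 with heq | ⟨Y1, hr1, hs1⟩
    · subst heq; exact ⟨X2, h2, Relation.ReflTransGen.refl⟩
    · exfalso
      obtain ⟨hlt, hle, hleY⟩ := step_measure hs1
      omega
  | succ N ih =>
    intro Y X1 X2 hm h1 h2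
    rcases Relation.ReflTransGen.cases_tail h1 with heq | ⟨Y1, hr1, hs1⟩
    · subst heq; exact ⟨X2, h2, Relation.ReflTransGen.refl⟩
    rcases Relation.ReflTransGen.cases_tail h2 with heq | ⟨Y2, hr2, hs2⟩
    · subst heq; exact ⟨X1, Relation.ReflTransGen.refl, h1⟩
    obtain ⟨hlt1, hle1, hleY⟩ := step_measure hs1
    obtain ⟨hlt2, hle2, -⟩ := step_measure hs2
    have hm1 : (Finset.range (n+1)).sum a - Y1.sum a ≤ N := by omega
    have hm2 : (Finset.range (n+1)).sum a - Y2.sum a ≤ N := by omega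
    obtain ⟨W, hw1, hw2⟩ := diamond hs1 hs2
    obtain ⟨Z1, hz1a, hz1b⟩ := ih Y1 X1 W hm1 hr1 hw1
    obtain ⟨Z, hza, hzb⟩ := ih Y2 Z1 X2 hm2 (hz1b.trans hw2) hr2
    exact ⟨Z, hza.trans hz1a, hzb⟩

end Stmt9

end AuxStmt9

/-- If `I` and `J` are maximum feasible sets with `I ⊲ J`, then the
`⊲`-minimal sets of `M(I)` and `M(J)` are identical: any `⊲`-minimal member
of `M(I)` equals any `⊲`-minimal member of `M(J)`. -/
theorem stmt9 (n : ℕ) (a : ℕ → ℕ) (hn : 0 < n) (h0 : a 0 = 0)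
    (hmem : ∀ i ∈ Finset.Icc 1 n, a i ∈ Finset.Icc 1 n)
    (hinj : ∀ i ∈ Finset.Icc 1 n, ∀ j ∈ Finset.Icc 1 n, a i = a j → i = j)
    (I J : Finset ℕ) (hI : MaxFeasible a n I) (hJ : MaxFeasible a n J)
    (hIJ : PileLT a n I J)
    (K K' : Finset ℕ)
    (hK : MaxFeasible a n K ∧ InLowerSet a n K I ∧ MinimalLT a n K)
    (hK' : MaxFeasible a n K' ∧ InLowerSet a n K' J ∧ MinimalLT a n K') :
    K = K' := by
  obtain ⟨hKmf, hKI, hKmin⟩ := hK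
  obtain ⟨hK'mf, hK'J, hK'min⟩ := hK'
  have hKJ : Relation.ReflTransGen (StepLT a n) K J := hKI.tail ⟨hI, hJ, hIJ⟩
  obtain ⟨Z, hZK, hZK'⟩ := Stmt9.confluence a n
    ((Finset.range (n+1)).sum a - J.sum a) J K K' le_rfl hKJ hK'J
  have e1 : Z = K := by
    rcases Relation.ReflTransGen.cases_tail hZK with heq | ⟨c, hc1, hc⟩
    · exact heq.symm
    · exact absurd hc.2.2 (hKmin c hc.1)
  have e2 : Z = K' := by
    rcases Relation.ReflTransGen.cases_tail hZK' with heq | ⟨c, hc1, hc⟩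
    · exact heq.symm
    · exact absurd hc.2.2 (hK'min c hc.1)
  rw [← e1, e2]
end
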